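/- arXiv:2102.07727 — 2 statements merged into one kernel-verified Lean document; each statement's English description precedes it below -/
import Mathlib

section
/- For a torus action, w ∈ closure(O_v) if and only if there exists ν ∈ ℤ^d such that: (a) {j ∈ supp(v) | ν·m^{(j)} = 0} = supp(w) and ν·m^{(k)} > 0 for all k ∈ supp(v)∖supp(w); and (b) v|_{supp(w)} lies in the T-orbit of w. -/
open scoped BigOperators

noncomputable section

/-- Action of the torus `(ℂˣ)^d` on `ℂ^n` given by the integer weight matrix `M`:
coordinate `j` is scaled by the Laurent monomial `∏ i, (t i) ^ (M i j)`. -/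
def torusAct {d n : ℕ} (M : Matrix (Fin d) (Fin n) ℤ) (t : Fin d → ℂˣ) (v : Fin n → ℂ) :
    Fin n → ℂ := fun j => (∏ i, (t i : ℂ) ^ M i j) * v j

/-- The orbit of `v` under the torus action. -/
def torusOrbit {d n : ℕ} (M : Matrix (Fin d) (Fin n) ℤ) (v : Fin n → ℂ) : Set (Fin n → ℂ) :=
  {w | ∃ t : Fin d → ℂˣ, w = torusAct M t v}

/-- The Newton cone `C(v)`: the convex cone generated by the columns `m⁽ʲ⁾` of `M`
for `j` in the support of `v`. -/
def newtonCone {d n : ℕ} (M : Matrix (Fin d) (Fin n) ℤ) (v : Fin n → ℂ) : Set (Fin d → ℝ) :=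
  {y | ∃ c : Fin n → ℝ, (∀ j, 0 ≤ c j) ∧ (∀ j, v j = 0 → c j = 0) ∧
    y = ∑ j, c j • (fun i => (M i j : ℝ))}

/-- The lineality space `L(v) = C(v) ∩ (-C(v))` of the Newton cone. -/
def lineality {d n : ℕ} (M : Matrix (Fin d) (Fin n) ℤ) (v : Fin n → ℂ) : Set (Fin d → ℝ) :=
  newtonCone M v ∩ -newtonCone M v

/-- The essential support: indices `j` in the support of `v` whose weight column
lies in the lineality space of the Newton cone. -/
def esupp {d n : ℕ} (M : Matrix (Fin d) (Fin n) ℤ) (v : Fin n → ℂ) : Set (Fin n) :=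
  {j | v j ≠ 0 ∧ (fun i => (M i j : ℝ)) ∈ lineality M v}

lemma prod_zpow_sum {G ι : Type*} [CommGroup G] (s : Finset ι) (a : G) (f : ι → ℤ) :
    ∏ i ∈ s, a ^ f i = a ^ (∑ i ∈ s, f i) := by
  induction s using Finset.cons_induction with
  | empty => simp
  | cons j s hj ih => rw [Finset.prod_cons, Finset.sum_cons, ih, zpow_add]

lemma chi_units {d n : ℕ} (M : Matrix (Fin d) (Fin n) ℤ) (t : Fin d → ℂˣ) (j : Fin n) :
    (∏ i, (t i : ℂ) ^ M i j) = ((∏ i, t i ^ M i j : ℂˣ) : ℂ) := by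
  have := map_prod (Units.coeHom ℂ) (fun i => t i ^ M i j) Finset.univ
  rw [show ((∏ i, t i ^ M i j : ℂˣ) : ℂ) = (Units.coeHom ℂ) (∏ i, t i ^ M i j) from rfl, this]
  exact Finset.prod_congr rfl fun i _ => (Units.val_zpow_eq_zpow_val _ _).symm

lemma torusAct_mul {d n : ℕ} (M : Matrix (Fin d) (Fin n) ℤ) (t s : Fin d → ℂˣ)
    (v : Fin n → ℂ) : torusAct M t (torusAct M s v) = torusAct M (fun i => t i * s i) v := by
  funext j
  simp only [torusAct]
  rw [← mul_assoc]
  congr 1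
  rw [← Finset.prod_mul_distrib]
  exact Finset.prod_congr rfl fun i _ => by
    rw [Units.val_mul, mul_zpow]

lemma torusAct_one {d n : ℕ} (M : Matrix (Fin d) (Fin n) ℤ) (v : Fin n → ℂ) :
    torusAct M (fun _ => 1) v = v := by
  funext j; simp [torusAct]

lemma torusAct_continuous {d n : ℕ} (M : Matrix (Fin d) (Fin n) ℤ) (t : Fin d → ℂˣ) :
    Continuous (torusAct M t) :=
  continuous_pi fun j => (continuous_const.mul (continuous_apply j))

lemma closure_act {d n : ℕ} (M : Matrix (Fin d) (Fin n) ℤ) (t : Fin d → ℂˣ)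
    {u v : Fin n → ℂ} (hu : u ∈ closure (torusOrbit M v)) :
    torusAct M t u ∈ closure (torusOrbit M v) := by
  have h1 : torusAct M t '' closure (torusOrbit M v) ⊆ closure (torusAct M t '' torusOrbit M v) :=
    image_closure_subset_closure_image (torusAct_continuous M t)
  have h2 : torusAct M t '' torusOrbit M v ⊆ torusOrbit M v := by
    rintro x ⟨y, ⟨s, rfl⟩, rfl⟩
    exact ⟨fun i => t i * s i, (torusAct_mul M t s v)⟩
  exact closure_mono h2 (h1 ⟨u, hu, rfl⟩)

lemma backward_dir {d n : ℕ} (M : Matrix (Fin d) (Fin n) ℤ) (v w : Fin n → ℂ) (ν : Fin d → ℤ)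
    (ha : ∀ j, (v j ≠ 0 ∧ ∑ i, ν i * M i j = 0) ↔ w j ≠ 0)
    (hb : ∀ k, v k ≠ 0 → w k = 0 → 0 < ∑ i, ν i * M i k)
    (hc : Set.indicator {j | w j ≠ 0} v ∈ torusOrbit M w) :
    w ∈ closure (torusOrbit M v) := by
  set e : Fin n → ℤ := fun j => ∑ i, ν i * M i j with he
  set L : Fin n → ℂ := Set.indicator {j | w j ≠ 0} v with hL
  set f : ℝ → (Fin n → ℂ) := fun s j => (s : ℂ) ^ (e j) * v j with hf
  -- f s ∈ orbit for s > 0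
  have claim1 : ∀ s : ℝ, 0 < s → f s ∈ torusOrbit M v := by
    intro s hs
    have hs' : (s : ℂ) ≠ 0 := by exact_mod_cast hs.ne'
    refine ⟨fun i => (Units.mk0 (s : ℂ) hs') ^ ν i, ?_⟩
    funext j
    simp only [hf, torusAct]
    congr 1
    rw [chi_units]
    have : ∏ i, ((Units.mk0 (s:ℂ) hs') ^ ν i) ^ M i j = (Units.mk0 (s:ℂ) hs') ^ e j := by
      rw [he]
      rw [← prod_zpow_sum]
      exact Finset.prod_congr rfl fun i _ => (zpow_mul _ _ _).symm
    rw [this, Units.val_zpow_eq_zpow_val, Units.val_mk0]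
  -- w j = 0 whenever v j = 0
  have hsupp : ∀ j, v j = 0 → w j = 0 := by
    intro j hv
    by_contra hw
    exact ((ha j).mpr hw).1 hv
  -- the limit
  have claim2 : Filter.Tendsto f (nhdsWithin 0 (Set.Ioi (0:ℝ))) (nhds L) := by
    rw [tendsto_pi_nhds]
    intro j
    by_cases hv : v j = 0
    · have hw : w j = 0 := hsupp j hv
      have hLj : L j = 0 := by simp [hL, Set.indicator, hw]
      rw [hLj]
      have : ∀ s : ℝ, f s j = 0 := fun s => by simp [hf, hv]
      simpa [this] using tendsto_const_nhds
    · by_cases hej : e j = 0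
      · have hw : w j ≠ 0 := (ha j).mp ⟨hv, hej⟩
        have hLj : L j = v j := by simp [hL, Set.indicator, hw]
        rw [hLj]
        have : ∀ s : ℝ, f s j = v j := fun s => by simp [hf, hej]
        simpa [this] using tendsto_const_nhds
      · have hw : w j = 0 := by
          by_contra hw
          exact hej ((ha j).mpr hw).2
        have hepos : 0 < e j := hb j hv hw
        have hLj : L j = 0 := by simp [hL, Set.indicator, hw]
        rw [hLj]
        have h1 : Filter.Tendsto (fun s : ℝ => (s : ℂ)) (nhdsWithin 0 (Set.Ioi (0:ℝ)))
            (nhds 0) := by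
          have := Complex.continuous_ofReal.tendsto (0 : ℝ)
          simpa using this.mono_left nhdsWithin_le_nhds
        have h2 := h1.zpow₀ (e j) (Or.inr hepos.le)
        rw [zero_zpow _ hepos.ne'] at h2
        simpa using h2.mul_const (v j)
  have hLmem : L ∈ closure (torusOrbit M v) := by
    refine mem_closure_of_tendsto claim2 ?_
    filter_upwards [self_mem_nhdsWithin] with s hs
    exact claim1 s hs
  obtain ⟨t₀, ht₀⟩ := hc
  have : w = torusAct M (fun i => (t₀ i)⁻¹) L := by
    rw [ht₀, torusAct_mul]
    simp [torusAct_one]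
  rw [this]
  exact closure_act M _ hLmem

noncomputable instance : RootableBy ℂˣ ℕ :=
  rootableByOfPowLeftSurj _ _ (fun {n} hn a => by
    obtain ⟨z, hz⟩ := IsAlgClosed.exists_pow_nat_eq (k := ℂ) (a : ℂ) (Nat.pos_of_ne_zero hn)
    have hz0 : z ≠ 0 := by
      intro h
      rw [h, zero_pow hn] at hz
      exact a.ne_zero hz.symm
    exact ⟨Units.mk0 z hz0, Units.ext (by simpa using hz)⟩)

noncomputable instance : RootableBy ℂˣ ℤ := Group.rootableByIntOfRootableByNat ℂˣ

noncomputable instance : DivisibleBy (Additive ℂˣ) ℤ where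
  div a n := Additive.ofMul (RootableBy.root (Additive.toMul a) n)
  div_zero a := by
    show Additive.ofMul (RootableBy.root (Additive.toMul a) (0:ℤ)) = 0
    rw [RootableBy.root_zero, ofMul_one]
  div_cancel a hn := by
    change (_ : ℤ) • Additive.ofMul _ = a
    rw [← ofMul_zpow, RootableBy.root_cancel _ hn]
    rfl

lemma exists_units_of_relations {d : ℕ} {ι : Type} [Fintype ι] [DecidableEq ι]
    (P : Matrix (Fin d) ι ℤ) (z : ι → ℂˣ)
    (hrel : ∀ c : ι → ℤ, (∀ i, ∑ j, c j * P i j = 0) → ∏ j, z j ^ c j = 1) :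
    ∃ t : Fin d → ℂˣ, ∀ j, ∏ i, t i ^ P i j = z j := by
  set G := Additive ℂˣ
  set φ : (ι → ℤ) →ₗ[ℤ] (Fin d → ℤ) := Matrix.mulVecLin P with hφ
  set ζ : (ι → ℤ) →ₗ[ℤ] G := AddMonoidHom.toIntLinearMap
    { toFun := fun c => Additive.ofMul (∏ j, z j ^ c j)
      map_zero' := by simp
      map_add' := fun a b => by
        simp only [Pi.add_apply]
        rw [show (∏ j, z j ^ (a j + b j)) = (∏ j, z j ^ a j) * (∏ j, z j ^ b j) by
          rw [← Finset.prod_mul_distrib]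
          exact Finset.prod_congr rfl fun j _ => zpow_add _ _ _]
        rfl } with hζ
  have hker : LinearMap.ker φ ≤ LinearMap.ker ζ := by
    intro c hc
    rw [LinearMap.mem_ker] at hc ⊢
    have : ∀ i, ∑ j, c j * P i j = 0 := by
      intro i
      have := congrFun hc i
      simpa [hφ, Matrix.mulVecLin, Matrix.mulVec, dotProduct, mul_comm] using this
    have h1 := hrel c this
    show Additive.ofMul (∏ j, z j ^ c j) = 0
    rw [h1]
    rfl
  set g := Submodule.liftQ (LinearMap.ker φ) ζ hker
  set eqv := LinearMap.quotKerEquivRange φ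
  obtain ⟨τ, hτ⟩ := Module.Baer.extension_property (Module.Baer.of_divisible G)
    ((LinearMap.range φ).subtype) (Submodule.injective_subtype _)
    (g ∘ₗ eqv.symm.toLinearMap)
  have hτφ : ∀ c : ι → ℤ, τ (φ c) = ζ c := by
    intro c
    have h2 : eqv.symm ⟨φ c, LinearMap.mem_range_self φ c⟩ = Submodule.Quotient.mk c :=
      LinearMap.quotKerEquivRange_symm_apply_image φ c (LinearMap.mem_range_self φ c)
    have h3 : τ ((LinearMap.range φ).subtype ⟨φ c, LinearMap.mem_range_self φ c⟩) =
        (g ∘ₗ eqv.symm.toLinearMap) ⟨φ c, LinearMap.mem_range_self φ c⟩ := by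
      rw [← LinearMap.comp_apply, hτ]
    simpa [h2, g, Submodule.liftQ_apply] using h3
  refine ⟨fun i => Additive.toMul (τ (Pi.single i 1)), fun j => ?_⟩
  have hexp : ∀ x : Fin d → ℤ, τ x = ∑ i, x i • τ (Pi.single i 1) := by
    intro x
    conv_lhs => rw [← Finset.univ_sum_single x]
    rw [map_sum]
    refine Finset.sum_congr rfl fun i _ => ?_
    have hsingle : (x i • Pi.single i (1:ℤ) : Fin d → ℤ) = Pi.single i (x i) := by
      ext k
      by_cases h : k = i <;> simp [Pi.single_apply, h]
    rw [← hsingle, map_smul]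
  have hcol : φ (Pi.single j 1) = fun i => P i j := by
    funext i
    simp [hφ, Matrix.mulVecLin, Matrix.mulVec, dotProduct, Pi.single_apply]
  have h4 : τ (fun i => P i j) = Additive.ofMul (z j) := by
    rw [← hcol, hτφ]
    have hz : ζ (Pi.single j 1) = Additive.ofMul (∏ j', z j' ^ ((Pi.single j (1:ℤ) : ι → ℤ) j')) := rfl
    rw [hz]
    congr 1
    rw [Finset.prod_eq_single j (fun b _ hb => by simp [Pi.single_apply, hb])
      (fun h => absurd (Finset.mem_univ j) h)]
    simp
  have h5 := congrArg Additive.toMul ((hexp (fun i => P i j)).symm.trans h4)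
  rw [toMul_ofMul] at h5
  rw [← h5, toMul_sum]
  exact Finset.prod_congr rfl fun i _ => toMul_zsmul _ _

section DotForm
variable (K : Type*) [Field K] [LinearOrder K] [IsStrictOrderedRing K] (d : ℕ)

/-- The standard dot-product bilinear form on `Fin d → K`. -/
def dotForm : LinearMap.BilinForm K (Fin d → K) :=
  LinearMap.mk₂ K (fun x y => ∑ i, x i * y i)
    (fun x x' y => by simp [add_mul, Finset.sum_add_distrib])
    (fun c x y => by simp [Finset.mul_sum, mul_assoc])
    (fun x y y' => by simp [mul_add, Finset.sum_add_distrib])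
    (fun c x y => by
      simp only [Finset.mul_sum, smul_eq_mul, Pi.smul_apply]
      exact Finset.sum_congr rfl fun i _ => by ring)

variable {K d}

lemma dotForm_apply (x y : Fin d → K) : dotForm K d x y = ∑ i, x i * y i := rfl

lemma dotForm_symm (x y : Fin d → K) : dotForm K d x y = dotForm K d y x := by
  simp only [dotForm_apply]
  exact Finset.sum_congr rfl fun i _ => mul_comm _ _

lemma dotForm_self_eq_zero {x : Fin d → K} (h : dotForm K d x x = 0) : x = 0 := by
  funext i
  have hnn : ∀ j ∈ Finset.univ, (0:K) ≤ x j * x j := fun j _ => mul_self_nonneg _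
  have := (Finset.sum_eq_zero_iff_of_nonneg hnn).mp h i (Finset.mem_univ i)
  exact mul_self_eq_zero.mp this

lemma dotForm_isRefl : (dotForm K d).IsRefl := fun x y h => by rw [dotForm_symm] at h; exact h

lemma dotForm_span_zero {S : Set (Fin d → K)} {y : Fin d → K}
    (h : ∀ s ∈ S, dotForm K d y s = 0) :
    ∀ s ∈ Submodule.span K S, dotForm K d y s = 0 := by
  intro s hs
  induction hs using Submodule.span_induction with
  | mem z hz => exact h z hz
  | zero => simp
  | add a b _ _ ha hb => rw [map_add, ha, hb, add_zero]
  | smul c a _ ha => rw [map_smul, ha, smul_zero]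

/-- Orthogonal decomposition with respect to the dot form. -/
lemma exists_dot_proj (W : Submodule K (Fin d → K)) (x : Fin d → K) :
    ∃ u ∈ W, ∀ s ∈ W, dotForm K d (x - u) s = 0 := by
  have b₂ : ((dotForm K d).restrict W).Nondegenerate := by
    suffices hl : ((dotForm K d).restrict W).SeparatingLeft from
      ⟨hl, fun y hy => hl y fun x => dotForm_isRefl _ _ (hy x)⟩
    intro ⟨m, hm⟩ hmm
    have := hmm ⟨m, hm⟩
    simp only [LinearMap.BilinForm.restrict_apply] at this
    exact Subtype.ext (dotForm_self_eq_zero this)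
  have hcompl := LinearMap.BilinForm.isCompl_orthogonal_of_restrict_nondegenerate
    (B := dotForm K d) (W := W) dotForm_isRefl b₂
  obtain ⟨u, yy, hu, hyy, hsum⟩ := Submodule.codisjoint_iff_exists_add_eq.mp hcompl.codisjoint x
  refine ⟨u, hu, fun s hs => ?_⟩
  have hxu : x - u = yy := by rw [← hsum]; ring
  rw [hxu]
  have := hyy s hs
  exact dotForm_isRefl _ _ this

end DotForm

lemma dotForm_sum_left {K : Type*} [Field K] [LinearOrder K] [IsStrictOrderedRing K] {d m : ℕ}
    (c : Fin m → K) (g : Fin m → (Fin d → K)) (s : Fin d → K) :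
    dotForm K d (∑ l, c l • g l) s = ∑ l, c l * dotForm K d (g l) s := by
  rw [map_sum, LinearMap.sum_apply]
  exact Finset.sum_congr rfl fun l _ => by
    rw [map_smul, LinearMap.smul_apply, smul_eq_mul]

lemma dotForm_cast {d : ℕ} (a b : Fin d → ℚ) :
    dotForm ℝ d (fun k => ((a k : ℚ) : ℝ)) (fun k => ((b k : ℚ) : ℝ))
      = ((dotForm ℚ d a b : ℚ) : ℝ) := by
  rw [dotForm_apply, dotForm_apply]
  push_cast
  rfl

open Filter in
lemma exists_nu {d n : ℕ} (M : Matrix (Fin d) (Fin n) ℤ) (A B : Set (Fin n))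
    (x : ℕ → (Fin d → ℝ))
    (hA : ∀ j ∈ A, ∃ L : ℝ, Tendsto (fun k => ∑ i, x k i * (M i j : ℝ)) atTop (nhds L))
    (hB : ∀ j ∈ B, Tendsto (fun k => ∑ i, x k i * (M i j : ℝ)) atTop atBot) :
    ∃ ν : Fin d → ℤ, (∀ j ∈ A, ∑ i, ν i * M i j = 0) ∧ (∀ j ∈ B, 0 < ∑ i, ν i * M i j) := by
  classical
  set mR : Fin n → (Fin d → ℝ) := fun j i => (M i j : ℝ) with hmR
  have hdotx : ∀ (z : Fin d → ℝ) (j : Fin n), dotForm ℝ d z (mR j) = ∑ i, z i * (M i j : ℝ) :=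
    fun z j => rfl
  set W : Submodule ℝ (Fin d → ℝ) := Submodule.span ℝ (mR '' A) with hW
  -- Step 1: find a real vector y orthogonal to all mR j (j ∈ A) with dot y (mR j) < 0 (j ∈ B)
  have step1 : ∃ y : Fin d → ℝ, (∀ j ∈ A, dotForm ℝ d y (mR j) = 0) ∧
      (∀ j ∈ B, dotForm ℝ d y (mR j) < 0) := by
    -- decompose each weight column against W
    have hdecomp : ∀ j : Fin n, ∃ u ∈ W, ∀ s ∈ W, dotForm ℝ d (mR j - u) s = 0 :=
      fun j => exists_dot_proj W (mR j)
    choose u hu hperp using hdecomp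
    have hcomb : ∀ j : Fin n, ∃ (m : ℕ) (c : Fin m → ℝ) (σ : Fin m → Fin n),
        (∀ l, σ l ∈ A) ∧ u j = ∑ l, c l • mR (σ l) := by
      intro j
      obtain ⟨m, c, g, hsum⟩ := Submodule.mem_span_set'.mp (hu j)
      have hg : ∀ l, ∃ jl ∈ A, mR jl = (g l : Fin d → ℝ) := by
        intro l
        obtain ⟨jl, hjl, hjl2⟩ := (g l).2
        exact ⟨jl, hjl, hjl2⟩
      choose σ hσ hσ2 using hg
      exact ⟨m, c, σ, hσ, by rw [← hsum]; exact (Finset.sum_congr rfl fun l _ => by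
        rw [hσ2 l]).symm⟩
    choose m c σ hσA hσsum using hcomb
    -- the quantity ⟨x k, mR j⟩ - Σ_l c l ⟨x k, mR (σ l)⟩  tends to -∞ for j ∈ B
    have hkey : ∀ j ∈ B, Tendsto (fun k => dotForm ℝ d (x k) (mR j) -
        ∑ l, c j l * dotForm ℝ d (x k) (mR (σ j l))) atTop atBot := by
      intro j hj
      have h1 : Tendsto (fun k => ∑ l, c j l * dotForm ℝ d (x k) (mR (σ j l))) atTop
          (nhds (∑ l, c j l * Classical.choose (hA (σ j l) (hσA j l)))) := by
        refine tendsto_finset_sum _ fun l _ => ?_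
        have := Classical.choose_spec (hA (σ j l) (hσA j l))
        exact Tendsto.const_mul _ (by simpa [hdotx] using this)
      have h2 : Tendsto (fun k => dotForm ℝ d (x k) (mR j)) atTop atBot := by
        simpa [hdotx] using hB j hj
      exact h2.atBot_add (h1.neg)
    -- pick a good index k
    have hev : ∀ᶠ k in atTop, ∀ j : Fin n, j ∈ B → dotForm ℝ d (x k) (mR j) -
        ∑ l, c j l * dotForm ℝ d (x k) (mR (σ j l)) < 0 := by
      rw [eventually_all]
      intro j
      by_cases hj : j ∈ B
      · exact ((hkey j hj).eventually_lt_atBot 0).mono fun k hk _ => hk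
      · exact Eventually.of_forall fun k hjj => absurd hjj hj
    obtain ⟨k, hk⟩ := hev.exists
    -- decompose x k
    obtain ⟨uu, huu, hyperp⟩ := exists_dot_proj W (x k)
    refine ⟨x k - uu, ?_, ?_⟩
    · intro j hj
      exact hyperp (mR j) (Submodule.subset_span ⟨j, hj, rfl⟩)
    · intro j hj
      have e1 : dotForm ℝ d (x k - uu) (mR j)
          = dotForm ℝ d (x k - uu) (u j) + dotForm ℝ d (x k - uu) (mR j - u j) := by
        rw [← map_add]
        congr 1
        ring
      have e2 : dotForm ℝ d (x k - uu) (u j) = 0 := hyperp (u j) (hu j)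
      have e3 : dotForm ℝ d uu (mR j - u j) = 0 :=
        dotForm_isRefl _ _ (hperp j uu huu)
      have e4 : dotForm ℝ d (x k - uu) (mR j - u j) = dotForm ℝ d (x k) (mR j - u j) := by
        rw [LinearMap.map_sub₂, e3, sub_zero]
      have e5 : dotForm ℝ d (x k) (u j) = ∑ l, c j l * dotForm ℝ d (x k) (mR (σ j l)) := by
        rw [hσsum j, map_sum]
        exact Finset.sum_congr rfl fun l _ => by rw [map_smul, smul_eq_mul]
      have e6 : dotForm ℝ d (x k) (mR j - u j)
          = dotForm ℝ d (x k) (mR j) - dotForm ℝ d (x k) (u j) := map_sub _ _ _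
      rw [e1, e2, e4, e6, e5, zero_add]
      exact hk j hj
  obtain ⟨y, hyA, hyB⟩ := step1
  -- Step 2: find a rational vector with the same properties
  have step2 : ∃ q : Fin d → ℚ, (∀ j ∈ A, ∑ i, q i * (M i j : ℚ) = 0) ∧
      (∀ j ∈ B, ∑ i, q i * (M i j : ℚ) < 0) := by
    set mQ : Fin n → (Fin d → ℚ) := fun j i => (M i j : ℚ) with hmQ
    set WQ : Submodule ℚ (Fin d → ℚ) := Submodule.span ℚ (mQ '' A) with hWQ
    have hmQW : ∀ j ∈ A, mQ j ∈ WQ := fun j hj => Submodule.subset_span ⟨j, hj, rfl⟩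
    have hdec : ∀ i : Fin d, ∃ u ∈ WQ, ∀ s ∈ WQ, dotForm ℚ d (Pi.single i 1 - u) s = 0 :=
      fun i => exists_dot_proj WQ (Pi.single i 1)
    choose uQ huQ hpQ using hdec
    set p : Fin d → (Fin d → ℚ) := fun i => Pi.single i 1 - uQ i with hp
    set pR : Fin d → (Fin d → ℝ) := fun i k => ((p i k : ℚ) : ℝ) with hpR
    have hpA : ∀ i, ∀ j ∈ A, dotForm ℚ d (p i) (mQ j) = 0 := fun i j hj => hpQ i _ (hmQW j hj)
    have hcastm : ∀ j, (fun k => ((mQ j k : ℚ) : ℝ)) = mR j := by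
      intro j; funext k; simp [hmQ, hmR]
    have hpAR : ∀ i, ∀ j ∈ A, dotForm ℝ d (pR i) (mR j) = 0 := by
      intro i j hj
      rw [← hcastm j, hpR, dotForm_cast, hpA i j hj, Rat.cast_zero]
    have hcastuW : ∀ i, (fun k => ((uQ i k : ℚ) : ℝ)) ∈ W := by
      intro i
      obtain ⟨mm, cc, gg, hsum⟩ := Submodule.mem_span_set'.mp (huQ i)
      have hfun : (fun k => ((uQ i k : ℚ) : ℝ))
          = ∑ l, ((cc l : ℝ)) • (fun k => (((gg l : Fin d → ℚ) k : ℚ) : ℝ)) := by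
        funext k
        rw [← hsum]
        rw [Finset.sum_apply, Finset.sum_apply]
        push_cast
        exact Finset.sum_congr rfl fun l _ => by
          simp [Pi.smul_apply, smul_eq_mul]
      rw [hfun]
      refine Submodule.sum_mem _ fun l _ => Submodule.smul_mem _ _ ?_
      obtain ⟨jl, hjl, hjl2⟩ := (gg l).2
      have hval : (fun k => (((gg l : Fin d → ℚ) k : ℚ) : ℝ)) = mR jl := by
        rw [← hjl2]
        exact hcastm jl
      rw [hval]
      exact Submodule.subset_span ⟨jl, hjl, rfl⟩
    have hePR : ∀ i k, ((uQ i k : ℚ) : ℝ) + pR i k = (Pi.single i (1:ℝ) : Fin d → ℝ) k := by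
      intro i k
      have h1 : pR i k = (((Pi.single i 1 : Fin d → ℚ) k : ℚ) : ℝ) - ((uQ i k : ℚ) : ℝ) := by
        rw [hpR]
        simp [hp]
      have h2 : (((Pi.single i 1 : Fin d → ℚ) k : ℚ) : ℝ) = (Pi.single i (1:ℝ) : Fin d → ℝ) k := by
        by_cases h : k = i <;> simp [Pi.single_apply, h]
      rw [h1, h2]
      ring
    set Pv : Fin d → ℝ := ∑ i, y i • pR i with hPv
    set U : Fin d → ℝ := ∑ i, y i • (fun k => ((uQ i k : ℚ) : ℝ)) with hU
    have hyUP : y = U + Pv := by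
      funext k
      have h1 : (U + Pv) k = ∑ i, y i * (((uQ i k : ℚ) : ℝ) + pR i k) := by
        simp [hU, hPv, Finset.sum_apply, mul_add, Finset.sum_add_distrib]
      rw [Pi.add_apply] at h1 ⊢
      rw [h1]
      have h3 : ∑ i, y i * (((uQ i k : ℚ) : ℝ) + pR i k)
          = ∑ i, (Pi.single i (y i) : Fin d → ℝ) k := by
        refine Finset.sum_congr rfl fun i _ => ?_
        rw [hePR i k]
        by_cases h : k = i <;> simp [Pi.single_apply, h]
      rw [h3, ← Finset.sum_apply, Finset.univ_sum_single y]
    have hUW : U ∈ W := Submodule.sum_mem _ fun i _ => Submodule.smul_mem _ _ (hcastuW i)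
    have hyW : ∀ s ∈ W, dotForm ℝ d y s = 0 := by
      rw [hW]
      exact dotForm_span_zero (by rintro s ⟨j, hj, rfl⟩; exact hyA j hj)
    have hPvA : ∀ j ∈ A, dotForm ℝ d Pv (mR j) = 0 := by
      intro j hj
      rw [hPv, dotForm_sum_left]
      exact Finset.sum_eq_zero fun i _ => by rw [hpAR i j hj, mul_zero]
    have hPvW : ∀ s ∈ W, dotForm ℝ d Pv s = 0 := by
      rw [hW]
      exact dotForm_span_zero (by rintro s ⟨j, hj, rfl⟩; exact hPvA j hj)
    have hU0 : U = 0 := by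
      have hUyPv : U = y - Pv := by rw [hyUP]; ring
      have hd : dotForm ℝ d U U = 0 := by
        calc dotForm ℝ d U U = dotForm ℝ d (y - Pv) U := by rw [← hUyPv]
        _ = dotForm ℝ d y U - dotForm ℝ d Pv U := LinearMap.map_sub₂ _ _ _ _
        _ = 0 := by rw [hyW U hUW, hPvW U hUW, sub_zero]
      exact dotForm_self_eq_zero hd
    have hyPv : y = Pv := by rw [hyUP, hU0, zero_add]
    -- rational approximation of y
    have happrox : ∀ m : ℕ, ∀ i, ∃ r : ℚ, |(r : ℝ) - y i| < 1/(m+1) := by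
      intro m i
      obtain ⟨r, hr⟩ := exists_rat_near (y i) (by positivity : (0:ℝ) < 1/(m+1))
      exact ⟨r, by rw [abs_sub_comm] at hr; exact_mod_cast hr⟩
    choose Q hQ using happrox
    have hQtend : ∀ i, Tendsto (fun m => ((Q m i : ℚ) : ℝ)) atTop (nhds (y i)) := by
      intro i
      rw [tendsto_iff_dist_tendsto_zero]
      refine squeeze_zero (g := fun m : ℕ => 1/(m+1)) (fun m => dist_nonneg) (fun m => ?_)
        tendsto_one_div_add_atTop_nhds_zero_nat
      exact le_of_lt (by rw [Real.dist_eq]; exact hQ m i)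
    have hval : ∀ j ∈ B, Tendsto (fun m => ∑ i, ((Q m i : ℚ) : ℝ) * dotForm ℝ d (pR i) (mR j))
        atTop (nhds (dotForm ℝ d y (mR j))) := by
      intro j hj
      have hrep : dotForm ℝ d y (mR j) = ∑ i, y i * dotForm ℝ d (pR i) (mR j) := by
        conv_lhs => rw [hyPv, hPv]
        rw [dotForm_sum_left]
      rw [hrep]
      exact tendsto_finset_sum _ fun i _ => (hQtend i).mul_const _
    have hev2 : ∀ᶠ m in atTop, ∀ j : Fin n, j ∈ B →
        ∑ i, ((Q m i : ℚ) : ℝ) * dotForm ℝ d (pR i) (mR j) < 0 := by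
      rw [eventually_all]
      intro j
      by_cases hj : j ∈ B
      · exact ((hval j hj).eventually_lt_const (hyB j hj)).mono fun m hm _ => hm
      · exact Eventually.of_forall fun m hjj => absurd hjj hj
    obtain ⟨mf, hmf⟩ := hev2.exists
    refine ⟨∑ i, Q mf i • p i, ?_, ?_⟩
    · intro j hj
      have : dotForm ℚ d (∑ i, Q mf i • p i) (mQ j) = 0 := by
        rw [dotForm_sum_left]
        exact Finset.sum_eq_zero fun i _ => by rw [hpA i j hj, mul_zero]
      rw [← this, dotForm_apply]
    · intro j hj
      have hcq : (fun k => (((∑ i, Q mf i • p i : Fin d → ℚ) k : ℚ) : ℝ))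
          = ∑ i, ((Q mf i : ℚ) : ℝ) • pR i := by
        funext k
        rw [Finset.sum_apply, Finset.sum_apply]
        push_cast
        exact Finset.sum_congr rfl fun i _ => by simp [Pi.smul_apply, smul_eq_mul, hpR]
      have hcd : ((dotForm ℚ d (∑ i, Q mf i • p i) (mQ j) : ℚ) : ℝ)
          = ∑ i, ((Q mf i : ℚ) : ℝ) * dotForm ℝ d (pR i) (mR j) := by
        rw [← dotForm_cast, hcq, hcastm j, dotForm_sum_left]
      have hlt := hmf j hj
      rw [← hcd] at hlt
      have : dotForm ℚ d (∑ i, Q mf i • p i) (mQ j) < 0 := by exact_mod_cast hlt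
      rw [dotForm_apply] at this
      exact this
  obtain ⟨q, hqA, hqB⟩ := step2
  -- Step 3: clear denominators
  set N : ℕ := ∏ i, (q i).den with hNdef
  have hNpos : 0 < N := Finset.prod_pos (fun i _ => (q i).pos)
  have hcast : ∀ i, ∃ z : ℤ, (z : ℚ) = (N : ℚ) * q i := by
    intro i
    obtain ⟨c, hc⟩ := Finset.dvd_prod_of_mem (fun i => (q i).den) (Finset.mem_univ i)
    refine ⟨(q i).num * (c : ℤ), ?_⟩
    have hden : ((q i).den : ℚ) ≠ 0 := Nat.cast_ne_zero.mpr (q i).den_nz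
    have hnum : ((q i).num : ℚ) = q i * ((q i).den : ℚ) := by
      exact (Rat.mul_den_eq_num (q i)).symm
    push_cast
    rw [hnum, hNdef, hc]
    push_cast
    ring
  choose z hz using hcast
  refine ⟨fun i => -z i, ?_, ?_⟩
  · intro j hj
    have hcalc : ((∑ i, (-z i) * M i j : ℤ) : ℚ) = -(N : ℚ) * ∑ i, q i * (M i j : ℚ) := by
      push_cast
      rw [Finset.mul_sum]
      refine Finset.sum_congr rfl fun i _ => ?_
      rw [hz i]
      ring
    have := hqA j hj
    rw [this, mul_zero] at hcalc
    exact_mod_cast hcalc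
  · intro j hj
    have hcalc : ((∑ i, (-z i) * M i j : ℤ) : ℚ) = -(N : ℚ) * ∑ i, q i * (M i j : ℚ) := by
      push_cast
      rw [Finset.mul_sum]
      refine Finset.sum_congr rfl fun i _ => ?_
      rw [hz i]
      ring
    have hpos : (0 : ℚ) < -(N : ℚ) * ∑ i, q i * (M i j : ℚ) := by
      apply mul_pos_of_neg_of_neg
      · simpa using (by exact_mod_cast hNpos : (0:ℚ) < (N:ℚ))
      · exact hqB j hj
    rw [← hcalc] at hpos
    exact_mod_cast hpos

open Filter in
lemma forward_dir {d n : ℕ} (M : Matrix (Fin d) (Fin n) ℤ) (v w : Fin n → ℂ)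
    (hw : w ∈ closure (torusOrbit M v)) :
    ∃ ν : Fin d → ℤ,
        (∀ j, (v j ≠ 0 ∧ ∑ i, ν i * M i j = 0) ↔ w j ≠ 0) ∧
        (∀ k, v k ≠ 0 → w k = 0 → 0 < ∑ i, ν i * M i k) ∧
        Set.indicator {j | w j ≠ 0} v ∈ torusOrbit M w := by
  classical
  obtain ⟨f, hfmem, hflim⟩ := mem_closure_iff_seq_limit.mp hw
  choose t ht using hfmem
  have hlim : Tendsto (fun k => torusAct M (t k) v) atTop (nhds w) := by
    convert hflim using 1
    funext k
    rw [ht k]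
  have hcoord : ∀ j, Tendsto (fun k => (∏ i, (t k i : ℂ) ^ M i j) * v j) atTop (nhds (w j)) := by
    intro j
    have := tendsto_pi_nhds.mp hlim j
    exact this
  have hsupp : ∀ j, v j = 0 → w j = 0 := by
    intro j hv
    have h0 : Tendsto (fun _ : ℕ => (0:ℂ)) atTop (nhds (w j)) := by
      convert hcoord j using 1
      funext k
      rw [hv, mul_zero]
    exact (tendsto_nhds_unique tendsto_const_nhds h0).symm
  have hchiunit : ∀ k j, (∏ i, (t k i : ℂ) ^ M i j) ≠ 0 := by
    intro k j
    rw [chi_units]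
    exact Units.ne_zero _
  have hchi : ∀ j, v j ≠ 0 → Tendsto (fun k => ∏ i, (t k i : ℂ) ^ M i j) atTop
      (nhds (w j / v j)) := by
    intro j hv
    have := (hcoord j).div_const (v j)
    convert this using 2 with k
    rw [mul_div_cancel_right₀ _ hv]
  set x : ℕ → Fin d → ℝ := fun k i => Real.log ‖(t k i : ℂ)‖ with hx
  have hxsum : ∀ k j, ∑ i, x k i * (M i j : ℝ) = Real.log ‖∏ i, (t k i : ℂ) ^ M i j‖ := by
    intro k j
    rw [norm_prod, Real.log_prod (fun i _ => by
      simp only [norm_zpow]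
      exact zpow_ne_zero _ (norm_ne_zero_iff.mpr (Units.ne_zero _)))]
    refine Finset.sum_congr rfl fun i _ => ?_
    rw [norm_zpow, Real.log_zpow]
    ring
  set A : Set (Fin n) := {j | w j ≠ 0} with hA
  set B : Set (Fin n) := {j | v j ≠ 0 ∧ w j = 0} with hB
  have hAv : ∀ j ∈ A, v j ≠ 0 := by
    intro j hj hv
    exact hj (hsupp j hv)
  have hAlim : ∀ j ∈ A, ∃ L : ℝ, Tendsto (fun k => ∑ i, x k i * (M i j : ℝ)) atTop (nhds L) := by
    intro j hj
    refine ⟨Real.log ‖w j / v j‖, ?_⟩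
    have h1 : Tendsto (fun k => ‖∏ i, (t k i : ℂ) ^ M i j‖) atTop (nhds ‖w j / v j‖) :=
      (hchi j (hAv j hj)).norm
    have h2 : ContinuousAt Real.log ‖w j / v j‖ :=
      Real.continuousAt_log (by
        rw [norm_ne_zero_iff]
        exact div_ne_zero hj (hAv j hj))
    have h3 := h2.tendsto.comp h1
    convert h3 using 1
    funext k
    simp only [Function.comp_apply]
    rw [hxsum k j]
  have hBlim : ∀ j ∈ B, Tendsto (fun k => ∑ i, x k i * (M i j : ℝ)) atTop atBot := by
    intro j hj
    obtain ⟨hv, hwj⟩ := hj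
    have h1 : Tendsto (fun k => ∏ i, (t k i : ℂ) ^ M i j) atTop (nhds 0) := by
      have := hchi j hv
      rwa [hwj, zero_div] at this
    have h2 : Tendsto (fun k => ‖∏ i, (t k i : ℂ) ^ M i j‖) atTop (nhds 0) := by
      simpa using h1.norm
    have h3 : Tendsto (fun k => ‖∏ i, (t k i : ℂ) ^ M i j‖) atTop (nhdsWithin 0 {0}ᶜ) := by
      refine tendsto_nhdsWithin_of_tendsto_nhds_of_eventually_within _ h2 ?_
      exact Eventually.of_forall fun k => by
        simp only [Set.mem_compl_iff, Set.mem_singleton_iff]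
        exact norm_ne_zero_iff.mpr (hchiunit k j)
    have h4 := Real.tendsto_log_nhdsNE_zero.comp h3
    convert h4 using 1
    funext k
    simp only [Function.comp_apply]
    rw [hxsum k j]
  obtain ⟨ν, hνA, hνB⟩ := exists_nu M A B x hAlim hBlim
  refine ⟨ν, ?_, ?_, ?_⟩
  · intro j
    constructor
    · rintro ⟨hv, hsum⟩
      by_contra hwj
      have : j ∈ B := ⟨hv, hwj⟩
      have := hνB j this
      omega
    · intro hwj
      refine ⟨hAv j hwj, hνA j hwj⟩
  · intro k hv hwk
    exact hνB k ⟨hv, hwk⟩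
  · -- part (b): the orbit statement
    set S := {j : Fin n // w j ≠ 0} with hS
    set P : Matrix (Fin d) S ℤ := fun i j => M i j.1 with hP
    set z : S → ℂˣ := fun j => Units.mk0 (v j.1 / w j.1)
      (div_ne_zero (hAv j.1 j.2) j.2) with hz
    have hrel : ∀ c : S → ℤ, (∀ i, ∑ j, c j * P i j = 0) → ∏ j, z j ^ c j = 1 := by
      intro c hc
      -- each finite stage is 1
      have hstage : ∀ k, ∏ j : S, (∏ i, (t k i : ℂ) ^ M i j.1) ^ c j = 1 := by
        intro k
        have hcast : ∏ j : S, (∏ i, (t k i : ℂ) ^ M i j.1) ^ c j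
            = ((∏ j : S, (∏ i, t k i ^ M i j.1) ^ c j : ℂˣ) : ℂ) := by
          have hval := map_prod (Units.coeHom ℂ)
            (fun j : S => (∏ i, t k i ^ M i j.1) ^ c j) Finset.univ
          rw [show ((∏ j : S, (∏ i, t k i ^ M i j.1) ^ c j : ℂˣ) : ℂ)
            = (Units.coeHom ℂ) (∏ j : S, (∏ i, t k i ^ M i j.1) ^ c j) from rfl, hval]
          refine Finset.prod_congr rfl fun j _ => ?_
          rw [show (Units.coeHom ℂ) ((∏ i, t k i ^ M i j.1) ^ c j)
            = (((∏ i, t k i ^ M i j.1 : ℂˣ) : ℂ)) ^ c j from Units.val_zpow_eq_zpow_val _ _,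
            chi_units]
        rw [hcast]
        have hu : (∏ j : S, (∏ i, t k i ^ M i j.1) ^ c j : ℂˣ) = 1 := by
          have h1 : ∀ j : S, ((∏ i, t k i ^ M i j.1 : ℂˣ)) ^ c j
              = ∏ i, t k i ^ (M i j.1 * c j) := by
            intro j
            rw [← Finset.prod_zpow]
            exact Finset.prod_congr rfl fun i _ => (zpow_mul _ _ _).symm
          calc (∏ j : S, (∏ i, t k i ^ M i j.1) ^ c j : ℂˣ)
              = ∏ j : S, ∏ i, t k i ^ (M i j.1 * c j) :=
                Finset.prod_congr rfl fun j _ => h1 j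
            _ = ∏ i, ∏ j : S, t k i ^ (M i j.1 * c j) := Finset.prod_comm
            _ = ∏ i, t k i ^ (∑ j : S, M i j.1 * c j) :=
                Finset.prod_congr rfl fun i _ => prod_zpow_sum _ _ _
            _ = 1 := by
                refine Finset.prod_eq_one fun i _ => ?_
                have : ∑ j : S, M i j.1 * c j = 0 := by
                  rw [← hc i]
                  exact Finset.sum_congr rfl fun j _ => mul_comm _ _
                rw [this, zpow_zero]
        rw [hu]
        rfl
      have hlim1 : Tendsto (fun k => ∏ j : S, (∏ i, (t k i : ℂ) ^ M i j.1) ^ c j) atTop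
          (nhds (∏ j : S, (w j.1 / v j.1) ^ c j)) :=
        tendsto_finset_prod _ fun j _ => (hchi j.1 (hAv j.1 j.2)).zpow₀ (c j)
          (Or.inl (div_ne_zero j.2 (hAv j.1 j.2)))
      have heq1 : ∏ j : S, (w j.1 / v j.1) ^ c j = 1 := by
        refine tendsto_nhds_unique hlim1 ?_
        have : (fun k : ℕ => ∏ j : S, (∏ i, (t k i : ℂ) ^ M i j.1) ^ c j)
            = fun _ : ℕ => (1:ℂ) := funext hstage
        rw [this]
        exact tendsto_const_nhds
      apply Units.ext
      have hval2 : ((∏ j : S, z j ^ c j : ℂˣ) : ℂ) = ∏ j : S, (v j.1 / w j.1) ^ c j := by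
        have hval := map_prod (Units.coeHom ℂ) (fun j : S => z j ^ c j) Finset.univ
        rw [show ((∏ j : S, z j ^ c j : ℂˣ) : ℂ)
          = (Units.coeHom ℂ) (∏ j : S, z j ^ c j) from rfl, hval]
        refine Finset.prod_congr rfl fun j _ => ?_
        rw [show (Units.coeHom ℂ) (z j ^ c j) = ((z j : ℂ)) ^ c j from
          Units.val_zpow_eq_zpow_val _ _]
        rfl
      have hinv : ∏ j : S, (v j.1 / w j.1) ^ c j = (∏ j : S, (w j.1 / v j.1) ^ c j)⁻¹ := by
        rw [← Finset.prod_inv_distrib]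
        refine Finset.prod_congr rfl fun j _ => ?_
        rw [← inv_zpow, inv_div]
      rw [hval2, hinv, heq1, inv_one]
      rfl
    obtain ⟨tt, htt⟩ := exists_units_of_relations P z hrel
    refine ⟨tt, ?_⟩
    funext j
    by_cases hwj : w j ≠ 0
    · have h1 : Set.indicator {j | w j ≠ 0} v j = v j := Set.indicator_of_mem (show j ∈ {j | w j ≠ 0} from hwj) v
      rw [h1]
      show v j = (∏ i, (tt i : ℂ) ^ M i j) * w j
      rw [chi_units]
      have h2 := htt ⟨j, hwj⟩
      rw [show (∏ i, tt i ^ P i (⟨j, hwj⟩ : S)) = ∏ i, tt i ^ M i j from rfl] at h2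
      rw [h2]
      show v j = (v j / w j) * w j
      rw [div_mul_cancel₀ _ hwj]
    · have h1 : Set.indicator {j | w j ≠ 0} v j = 0 :=
        Set.indicator_of_notMem (show j ∉ {j | w j ≠ 0} from hwj) v
      rw [h1]
      show (0:ℂ) = (∏ i, (tt i : ℂ) ^ M i j) * w j
      rw [not_not.mp hwj, mul_zero]

/-- `w ∈ closure (O_v)` iff there is `ν ∈ ℤ^d` such that (a) the indices `j ∈ supp v` with
`ν ⬝ m⁽ʲ⁾ = 0` are exactly `supp w` and `ν ⬝ m⁽ᵏ⁾ > 0` for `k ∈ supp v \ supp w`, and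
(b) the restriction `v|_{supp w}` lies in the `T`-orbit of `w`. -/
theorem mem_closure_orbit_iff_one_param {d n : ℕ} (M : Matrix (Fin d) (Fin n) ℤ)
    (v w : Fin n → ℂ) :
    w ∈ closure (torusOrbit M v) ↔
      ∃ ν : Fin d → ℤ,
        (∀ j, (v j ≠ 0 ∧ ∑ i, ν i * M i j = 0) ↔ w j ≠ 0) ∧
        (∀ k, v k ≠ 0 → w k = 0 → 0 < ∑ i, ν i * M i k) ∧
        Set.indicator {j | w j ≠ 0} v ∈ torusOrbit M w := by
  constructor
  · exact forward_dir M v w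
  · rintro ⟨ν, ha, hb, hc⟩
    exact backward_dir M v w ν ha hb hc
end
end

section
/- For a torus action, the orbit O_{ṽ} of ṽ := v|_{esupp(v)} is contained in every orbit closure contained in closure(O_v); consequently O_{ṽ} is the unique closed orbit in closure(O_v), and O_v is closed if and only if the Newton cone C(v) equals its lineality space L(v). -/
open scoped BigOperators

noncomputable section

open Finset

noncomputable def Complex.abs : AbsoluteValue ℂ ℝ := IsAbsoluteValue.toAbsoluteValue (norm : ℂ → ℝ)

lemma Complex.norm_eq_abs (z : ℂ) : ‖z‖ = Complex.abs z := rfl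

lemma Complex.continuous_abs : Continuous Complex.abs := continuous_norm

lemma Complex.abs_ofReal (r : ℝ) : Complex.abs (r : ℂ) = |r| := by
  rw [← Complex.norm_eq_abs, Complex.norm_real, Real.norm_eq_abs]

namespace TorusAux
variable {d n : ℕ} (M : Matrix (Fin d) (Fin n) ℤ)

/-- the Laurent monomial scaling factor -/
def tmon (t : Fin d → ℂˣ) (j : Fin n) : ℂ := ∏ i, (t i : ℂ) ^ M i j

lemma tmon_ne_zero (t : Fin d → ℂˣ) (j : Fin n) : tmon M t j ≠ 0 := by
  apply Finset.prod_ne_zero_iff.2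
  intro i _
  exact zpow_ne_zero _ (Units.ne_zero (t i))

lemma torusAct_apply (t : Fin d → ℂˣ) (v : Fin n → ℂ) (j : Fin n) :
    torusAct M t v j = tmon M t j * v j := rfl

lemma torusAct_comp (t s : Fin d → ℂˣ) (v : Fin n → ℂ) :
    torusAct M t (torusAct M s v) = torusAct M (t * s) v := by
  funext j
  simp only [torusAct, Pi.mul_apply, Units.val_mul, mul_zpow, Finset.prod_mul_distrib]
  ring

lemma self_mem_orbit (v : Fin n → ℂ) : v ∈ torusOrbit M v := by
  refine ⟨1, ?_⟩
  funext j
  simp [torusAct]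

lemma act_mem_orbit (t : Fin d → ℂˣ) (v : Fin n → ℂ) : torusAct M t v ∈ torusOrbit M v :=
  ⟨t, rfl⟩

lemma torusAct_inv (t : Fin d → ℂˣ) (v : Fin n → ℂ) :
    torusAct M t⁻¹ (torusAct M t v) = v := by
  rw [torusAct_comp]
  funext j
  simp [torusAct]

lemma orbit_eq_of_mem {v w : Fin n → ℂ} (h : w ∈ torusOrbit M v) :
    torusOrbit M w = torusOrbit M v := by
  obtain ⟨t, rfl⟩ := h
  ext u
  constructor
  · rintro ⟨s, rfl⟩
    exact ⟨s * t, by rw [torusAct_comp]⟩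
  · rintro ⟨s, rfl⟩
    exact ⟨s * t⁻¹, by rw [torusAct_comp, mul_assoc, inv_mul_cancel, mul_one]⟩

lemma continuous_torusAct (t : Fin d → ℂˣ) : Continuous (torusAct M t) := by
  apply continuous_pi
  intro j
  exact (continuous_const.mul (continuous_apply j))

lemma orbit_subset_closure_of_mem {v w : Fin n → ℂ} (h : w ∈ closure (torusOrbit M v)) :
    torusOrbit M w ⊆ closure (torusOrbit M v) := by
  rintro u ⟨t, rfl⟩
  have h1 : torusAct M t w ∈ torusAct M t '' closure (torusOrbit M v) := ⟨w, h, rfl⟩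
  have h2 := image_closure_subset_closure_image (continuous_torusAct M t) (s := torusOrbit M v)
  apply closure_mono ?_ (h2 h1)
  rintro u ⟨p, ⟨s, rfl⟩, rfl⟩
  rw [torusAct_comp]
  exact ⟨t * s, rfl⟩

lemma orbit_zero_iff {v w : Fin n → ℂ} (h : w ∈ torusOrbit M v) (j : Fin n) :
    w j = 0 ↔ v j = 0 := by
  obtain ⟨t, rfl⟩ := h
  rw [torusAct_apply]
  simp [tmon_ne_zero M t j]

lemma closure_orbit_zero {v : Fin n → ℂ} {j : Fin n} (hv : v j = 0) :
    ∀ w ∈ closure (torusOrbit M v), w j = 0 := by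
  intro w hw
  have : closure (torusOrbit M v) ⊆ {p : Fin n → ℂ | p j = 0} := by
    apply closure_minimal
    · rintro p ⟨t, rfl⟩
      simp [torusAct_apply, hv]
    · exact isClosed_eq (continuous_apply j) continuous_const
  exact this hw

end TorusAux

namespace ConeAux
variable {d n : ℕ}

lemma carath (x : Fin n → (Fin d → ℝ)) :
    ∀ (N : ℕ) (c : Fin n → ℝ), (univ.filter fun j => c j ≠ 0).card ≤ N → (∀ j, 0 ≤ c j) →
    ∃ c' : Fin n → ℝ, (∀ j, 0 ≤ c' j) ∧ (∀ j, c' j ≠ 0 → c j ≠ 0) ∧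
      LinearIndependent ℝ (fun j : {j // c' j ≠ 0} => x j) ∧
      ∑ j, c' j • x j = ∑ j, c j • x j := by
  classical
  intro N
  induction N with
  | zero =>
    intro c hcard hc0
    refine ⟨c, hc0, fun j h => h, ?_, rfl⟩
    have hempty : ∀ j, ¬ (c j ≠ 0) := by
      intro j hj
      have hmem : j ∈ univ.filter fun j => c j ≠ 0 := by simp [hj]
      have := Finset.card_pos.mpr ⟨j, hmem⟩
      omega
    haveI : IsEmpty {j // c j ≠ 0} := ⟨fun ⟨j, hj⟩ => hempty j hj⟩
    exact linearIndependent_empty_type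
  | succ N ih =>
    intro c hcard hc0
    by_cases hLI : LinearIndependent ℝ (fun j : {j // c j ≠ 0} => x j)
    · exact ⟨c, hc0, fun j h => h, hLI, rfl⟩
    rw [Fintype.not_linearIndependent_iff] at hLI
    obtain ⟨g, hgsum, jw, hjw⟩ := hLI
    obtain ⟨a0, ha0⟩ : ∃ a0 : Fin n → ℝ,
        ∀ j, a0 j = if h : c j ≠ 0 then g ⟨j, h⟩ else 0 := ⟨_, fun j => rfl⟩
    have ha0z : ∀ j, c j = 0 → a0 j = 0 := by
      intro j hj
      rw [ha0]
      exact dif_neg (by simp [hj])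
    have ha0sum : ∑ j, a0 j • x j = 0 := by
      have h1 : ∑ j ∈ univ.filter (fun j => c j ≠ 0), a0 j • x j = ∑ j, a0 j • x j := by
        apply Finset.sum_filter_of_ne
        intro j _ hj
        by_contra hc
        rw [ha0z j (by simpa using hc), zero_smul] at hj
        exact hj rfl
      rw [← h1, Finset.sum_subtype (p := fun j => c j ≠ 0)
        (univ.filter fun j => c j ≠ 0) (by simp) (fun j => a0 j • x j), ← hgsum]
      apply Finset.sum_congr rfl
      intro j _
      have hj' : a0 (j : Fin n) = g j := by
        rw [ha0, dif_pos j.2]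
      rw [hj']
    have ha0supp : ∀ j, a0 j ≠ 0 → c j ≠ 0 := by
      intro j hj hc
      exact hj (ha0z j hc)
    have ha0w : a0 (jw : Fin n) ≠ 0 := by
      have : a0 (jw : Fin n) = g jw := by rw [ha0, dif_pos jw.2]
      rw [this]; exact hjw
    obtain ⟨a, hasum, hasupp, jp, hjp⟩ :
        ∃ a : Fin n → ℝ, (∑ j, a j • x j = 0) ∧ (∀ j, a j ≠ 0 → c j ≠ 0) ∧
          ∃ jp, 0 < a jp := by
      rcases lt_or_gt_of_ne ha0w with h | h
      · refine ⟨-a0, ?_, fun j hj => ha0supp j (by simpa using hj), ⟨jw, by simpa using h⟩⟩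
        simp only [Pi.neg_apply, neg_smul, Finset.sum_neg_distrib, ha0sum, neg_zero]
      · exact ⟨a0, ha0sum, ha0supp, jw, h⟩
    have hTne : (univ.filter fun j => 0 < a j).Nonempty := ⟨jp, by simp [hjp]⟩
    obtain ⟨j₀, hj₀T, hj₀min⟩ :=
      Finset.exists_min_image (univ.filter fun j => 0 < a j) (fun j => c j / a j) hTne
    have haj₀ : 0 < a j₀ := by simpa using hj₀T
    obtain ⟨t, htdef⟩ : ∃ t : ℝ, t = c j₀ / a j₀ := ⟨_, rfl⟩
    have ht0 : 0 ≤ t := htdef ▸ div_nonneg (hc0 j₀) haj₀.le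
    obtain ⟨c'', hc''⟩ : ∃ c'' : Fin n → ℝ, ∀ j, c'' j = c j - t * a j := ⟨_, fun j => rfl⟩
    have hc''0 : ∀ j, 0 ≤ c'' j := by
      intro j
      rw [hc'']
      rcases le_or_gt (a j) 0 with h | h
      · have h2 : t * a j ≤ 0 := mul_nonpos_iff.mpr (Or.inl ⟨ht0, h⟩)
        have := hc0 j
        linarith
      · have hjT : j ∈ univ.filter fun j => 0 < a j := by simp [h]
        have hle := hj₀min j hjT
        rw [← htdef] at hle
        have h2 : t * a j ≤ c j := (le_div_iff₀ h).1 hle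
        linarith
    have hc''supp : ∀ j, c'' j ≠ 0 → c j ≠ 0 := by
      intro j hj hc
      have ha : a j = 0 := by
        by_contra ha
        exact hasupp j ha hc
      rw [hc'', hc, ha, mul_zero, sub_zero] at hj
      exact hj rfl
    have hj₀c : c j₀ ≠ 0 := hasupp j₀ (ne_of_gt haj₀)
    have hc''j₀ : c'' j₀ = 0 := by
      rw [hc'', htdef, div_mul_cancel₀ _ (ne_of_gt haj₀), sub_self]
    have hsub : (univ.filter fun j => c'' j ≠ 0) ⊂ (univ.filter fun j => c j ≠ 0) := by
      refine ⟨fun j hj => ?_, fun hcon => ?_⟩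
      · simp only [Finset.mem_filter, Finset.mem_univ, true_and] at hj ⊢
        exact hc''supp j hj
      · have h1 : j₀ ∈ univ.filter fun j => c j ≠ 0 := by simp [hj₀c]
        have h2 := hcon h1
        simp [hc''j₀] at h2
    have hcard'' : (univ.filter fun j => c'' j ≠ 0).card ≤ N := by
      have := Finset.card_lt_card hsub
      omega
    have hsum'' : ∑ j, c'' j • x j = ∑ j, c j • x j := by
      have heach : ∀ j, c'' j • x j = c j • x j - t • (a j • x j) := by
        intro j
        rw [hc'', sub_smul, mul_smul]
      simp only [heach]
      rw [Finset.sum_sub_distrib, ← Finset.smul_sum, hasum, smul_zero, sub_zero]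
    obtain ⟨c', h1, h2, h3, h4⟩ := ih c'' hcard'' hc''0
    exact ⟨c', h1, fun j hj => hc''supp j (h2 j hj), h3, h4.trans hsum''⟩

end ConeAux

namespace ConeAux2
open ConeAux
variable {d n : ℕ}

/-- linear map sending coefficients on `s` to the corresponding combination -/
def Ls (x : Fin n → (Fin d → ℝ)) (s : Finset (Fin n)) : (↥s → ℝ) →ₗ[ℝ] (Fin d → ℝ) :=
  ∑ j : ↥s, (LinearMap.proj j : (↥s → ℝ) →ₗ[ℝ] ℝ).smulRight (x ↑j)

lemma Ls_apply (x : Fin n → (Fin d → ℝ)) (s : Finset (Fin n)) (c : ↥s → ℝ) :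
    Ls x s c = ∑ j : ↥s, c j • x ↑j := by
  simp [Ls, LinearMap.sum_apply, LinearMap.smulRight_apply, LinearMap.proj_apply]

lemma isClosed_genCone (x : Fin n → (Fin d → ℝ)) (P : Fin n → Prop) :
    IsClosed {y : Fin d → ℝ | ∃ c : Fin n → ℝ, (∀ j, 0 ≤ c j) ∧ (∀ j, ¬ P j → c j = 0) ∧
      y = ∑ j, c j • x j} := by
  classical
  have main : {y : Fin d → ℝ | ∃ c : Fin n → ℝ, (∀ j, 0 ≤ c j) ∧ (∀ j, ¬ P j → c j = 0) ∧
      y = ∑ j, c j • x j} =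
      ⋃ s ∈ {s : Finset (Fin n) | (∀ j ∈ s, P j) ∧
        LinearIndependent ℝ (fun j : ↥s => x ↑j)}, (Ls x s) '' {c | ∀ j, 0 ≤ c j} := by
    ext y
    constructor
    · rintro ⟨c, hc0, hcP, rfl⟩
      obtain ⟨c', h1, h2, h3, h4⟩ := carath x _ c le_rfl hc0
      have hsP : ∀ j ∈ univ.filter fun j => c' j ≠ 0, P j := by
        intro j hj
        simp only [Finset.mem_filter, Finset.mem_univ, true_and] at hj
        by_contra hP
        exact h2 j hj (hcP j hP)
      have hsLI : LinearIndependent ℝ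
          (fun j : ↥(univ.filter fun j => c' j ≠ 0) => x ↑j) := by
        have hiff : ∀ j, j ∈ univ.filter (fun j => c' j ≠ 0) ↔ c' j ≠ 0 := fun j => by simp
        exact (linearIndependent_equiv' (Equiv.subtypeEquivRight hiff)
          (f := fun j : {j // c' j ≠ 0} => x ↑j)
          (g := fun j : ↥(univ.filter fun j => c' j ≠ 0) => x ↑j)
          (funext fun j => rfl)).mpr h3
      refine Set.mem_biUnion (show _ ∈ {s : Finset (Fin n) | (∀ j ∈ s, P j) ∧
          LinearIndependent ℝ (fun j : ↥s => x ↑j)} from ⟨hsP, hsLI⟩)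
        ⟨fun j => c' ↑j, fun j => h1 _, ?_⟩
      rw [Ls_apply]
      have e1 : ∑ j : ↥(univ.filter fun j => c' j ≠ 0), c' ↑j • x ↑j
          = ∑ j ∈ univ.filter fun j => c' j ≠ 0, c' j • x j :=
        Finset.sum_coe_sort (univ.filter fun j => c' j ≠ 0) (fun j => c' j • x j)
      rw [e1, ← h4]
      apply Finset.sum_subset (Finset.subset_univ _)
      intro j _ hj
      simp only [Finset.mem_filter, Finset.mem_univ, true_and, not_not] at hj
      rw [hj, zero_smul]
    · intro hy
      obtain ⟨s, hs, c, hc0, rfl⟩ := Set.mem_iUnion₂.1 hy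
      obtain ⟨ch, hch⟩ : ∃ ch : Fin n → ℝ,
          ∀ j, ch j = if h : j ∈ s then c ⟨j, h⟩ else 0 := ⟨_, fun _ => rfl⟩
      refine ⟨ch, ?_, ?_, ?_⟩
      · intro j
        rw [hch]
        by_cases h : j ∈ s
        · rw [dif_pos h]; exact hc0 _
        · rw [dif_neg h]
      · intro j hP
        have hns : j ∉ s := fun h => hP (hs.1 j h)
        rw [hch, dif_neg hns]
      · rw [Ls_apply]
        have e2 : ∑ j, ch j • x j = ∑ j ∈ s, ch j • x j := by
          symm
          apply Finset.sum_subset (Finset.subset_univ _)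
          intro j _ hj
          rw [hch, dif_neg hj, zero_smul]
        rw [e2, ← Finset.sum_coe_sort s (fun j => ch j • x j)]
        apply Finset.sum_congr rfl
        intro j _
        rw [hch, dif_pos j.2]
  rw [main]
  apply Set.Finite.isClosed_biUnion (Set.toFinite _)
  intro s hs
  have horth : IsClosed {c : ↥s → ℝ | ∀ j, 0 ≤ c j} := by
    have : {c : ↥s → ℝ | ∀ j, 0 ≤ c j} = ⋂ j, {c | 0 ≤ c j} := by
      ext c; simp [Set.mem_iInter]
    rw [this]
    exact isClosed_iInter fun j => isClosed_le continuous_const (continuous_apply j)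
  have hinj : Function.Injective (Ls x s) := by
    have hs2 := Fintype.linearIndependent_iff.1 hs.2
    intro c1 c2 h
    have hz : Ls x s (c1 - c2) = 0 := by
      rw [map_sub, h, sub_self]
    rw [Ls_apply] at hz
    have := hs2 (c1 - c2) hz
    funext i
    have := this i
    simp only [Pi.sub_apply, sub_eq_zero] at this
    exact this
  exact ((Ls x s).isClosedEmbedding_of_injective (LinearMap.ker_eq_bot.mpr hinj)).isClosedMap _ horth

end ConeAux2

section CB
variable {d n : ℕ} (M : Matrix (Fin d) (Fin n) ℤ) (v : Fin n → ℂ)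
namespace ConeBasic


lemma convex_newtonCone : Convex ℝ (newtonCone M v) := by
  rintro y ⟨c, hc0, hcs, rfl⟩ z ⟨c', hc0', hcs', rfl⟩ a b ha hb _
  refine ⟨fun j => a * c j + b * c' j, ?_, ?_, ?_⟩
  · intro j
    exact add_nonneg (mul_nonneg ha (hc0 j)) (mul_nonneg hb (hc0' j))
  · intro j hv
    simp only [hcs j hv, hcs' j hv, mul_zero, add_zero]
  · rw [Finset.smul_sum, Finset.smul_sum, ← Finset.sum_add_distrib]
    apply Finset.sum_congr rfl
    intro j _
    rw [smul_smul, smul_smul, ← add_smul]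

lemma zero_mem_newtonCone : (0 : Fin d → ℝ) ∈ newtonCone M v :=
  ⟨0, fun j => le_refl 0, fun j _ => rfl, by simp⟩

lemma smul_mem_newtonCone {r : ℝ} (hr : 0 ≤ r) {y : Fin d → ℝ}
    (hy : y ∈ newtonCone M v) : r • y ∈ newtonCone M v := by
  obtain ⟨c, hc0, hcs, rfl⟩ := hy
  refine ⟨fun j => r * c j, fun j => mul_nonneg hr (hc0 j),
    fun j hv => by simp only [hcs j hv, mul_zero], ?_⟩
  rw [Finset.smul_sum]
  apply Finset.sum_congr rfl
  intro j _
  rw [smul_smul]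

lemma add_mem_newtonCone {y z : Fin d → ℝ} (hy : y ∈ newtonCone M v)
    (hz : z ∈ newtonCone M v) : y + z ∈ newtonCone M v := by
  obtain ⟨c, hc0, hcs, rfl⟩ := hy
  obtain ⟨c', hc0', hcs', rfl⟩ := hz
  refine ⟨fun j => c j + c' j, fun j => add_nonneg (hc0 j) (hc0' j),
    fun j hv => by simp only [hcs j hv, hcs' j hv, add_zero], ?_⟩
  rw [← Finset.sum_add_distrib]
  apply Finset.sum_congr rfl
  intro j _
  rw [add_smul]

lemma sum_mem_newtonCone (g : Fin n → (Fin d → ℝ)) (hg : ∀ j, g j ∈ newtonCone M v) :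
    ∑ j, g j ∈ newtonCone M v := by
  classical
  apply Finset.sum_induction g (· ∈ newtonCone M v)
  · exact fun a b => add_mem_newtonCone M v
  · exact zero_mem_newtonCone M v
  · exact fun j _ => hg j

lemma col_mem_newtonCone {j : Fin n} (hj : v j ≠ 0) :
    (fun i => (M i j : ℝ)) ∈ newtonCone M v := by
  classical
  refine ⟨fun k => if k = j then 1 else 0, ?_, ?_, ?_⟩
  · intro k
    show (0:ℝ) ≤ if k = j then 1 else 0
    split <;> norm_num
  · intro k hv
    show (if k = j then (1:ℝ) else 0) = 0
    split
    · next h => exact absurd (h ▸ hv) hj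
    · rfl
  · rw [Finset.sum_eq_single j]
    · simp
    · intro k _ hk
      simp [hk]
    · simp

lemma newtonCone_mono {w : Fin n → ℂ} (h : ∀ j, v j = 0 → w j = 0) :
    newtonCone M w ⊆ newtonCone M v := by
  rintro y ⟨c, hc0, hcs, rfl⟩
  exact ⟨c, hc0, fun j hv => hcs j (h j hv), rfl⟩

lemma isClosed_newtonCone : IsClosed (newtonCone M v) := by
  have h := ConeAux2.isClosed_genCone (fun j => (fun i => (M i j : ℝ))) (fun j => v j ≠ 0)
  have : newtonCone M v = {y : Fin d → ℝ | ∃ c : Fin n → ℝ, (∀ j, 0 ≤ c j) ∧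
      (∀ j, ¬ (v j ≠ 0) → c j = 0) ∧ y = ∑ j, c j • (fun i => (M i j : ℝ))} := by
    ext y
    simp only [newtonCone, Set.mem_setOf_eq, not_not]
  rw [this]
  exact h

end ConeBasic
end CB

section Sep
variable {d n : ℕ} (M : Matrix (Fin d) (Fin n) ℤ) (v : Fin n → ℂ)
open ConeBasic

lemma neg_col_mem_of_esupp {j : Fin n} (hj : j ∈ esupp M v) :
    -(fun i => (M i j : ℝ)) ∈ newtonCone M v := by
  have h2 := hj.2.2
  rwa [Set.mem_neg] at h2

lemma esupp_of_mem_neg {j : Fin n} (hj : v j ≠ 0)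
    (h : -(fun i => (M i j : ℝ)) ∈ newtonCone M v) : j ∈ esupp M v := by
  refine ⟨hj, col_mem_newtonCone M v hj, ?_⟩
  rwa [Set.mem_neg]

lemma exists_separating : ∃ φ : (Fin d → ℝ) →L[ℝ] ℝ,
    (∀ y ∈ newtonCone M v, 0 ≤ φ y) ∧
    (∀ j, j ∈ esupp M v → φ (fun i => (M i j : ℝ)) = 0) ∧
    (∀ j, v j ≠ 0 → j ∉ esupp M v → 0 < φ (fun i => (M i j : ℝ))) := by
  classical
  have claim : ∀ j : Fin n, v j ≠ 0 → j ∉ esupp M v →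
      ∃ φ : (Fin d → ℝ) →L[ℝ] ℝ, (∀ y ∈ newtonCone M v, 0 ≤ φ y) ∧
        0 < φ (fun i => (M i j : ℝ)) := by
    intro j hvj hje
    have hnot : -(fun i => (M i j : ℝ)) ∉ newtonCone M v := by
      intro h
      exact hje (esupp_of_mem_neg M v hvj h)
    obtain ⟨f, u, hfs, hfx⟩ := geometric_hahn_banach_closed_point
      (convex_newtonCone M v) (isClosed_newtonCone M v) hnot
    have hu0 : 0 < u := by
      have := hfs 0 (zero_mem_newtonCone M v)
      simpa using this
    have hfneg : ∀ y ∈ newtonCone M v, f y ≤ 0 := by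
      intro y hy
      by_contra hpos
      push_neg at hpos
      have ht : 0 < (u + 1) / f y := div_pos (by linarith) hpos
      have hmem := smul_mem_newtonCone M v ht.le hy
      have := hfs _ hmem
      rw [map_smul] at this
      have : (u + 1) / f y * f y < u := this
      rw [div_mul_cancel₀ _ (ne_of_gt hpos)] at this
      linarith
    refine ⟨-f, ?_, ?_⟩
    · intro y hy
      simp only [ContinuousLinearMap.neg_apply, neg_nonneg]
      exact hfneg y hy
    · have : f (-(fun i => (M i j : ℝ))) = -f (fun i => (M i j : ℝ)) := map_neg f _
      simp only [ContinuousLinearMap.neg_apply]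
      rw [this] at hfx
      linarith
  set G : Fin n → ((Fin d → ℝ) →L[ℝ] ℝ) := fun j =>
    if h : v j ≠ 0 ∧ j ∉ esupp M v then Classical.choose (claim j h.1 h.2) else 0 with hGdef
  have hG1 : ∀ j, ∀ y ∈ newtonCone M v, 0 ≤ G j y := by
    intro j y hy
    simp only [hGdef]
    by_cases h : v j ≠ 0 ∧ j ∉ esupp M v
    · rw [dif_pos h]
      exact (Classical.choose_spec (claim j h.1 h.2)).1 y hy
    · rw [dif_neg h]
      rfl
  have hGpos : ∀ j, v j ≠ 0 → j ∉ esupp M v → 0 < G j (fun i => (M i j : ℝ)) := by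
    intro j h1 h2
    simp only [hGdef]
    rw [dif_pos ⟨h1, h2⟩]
    exact (Classical.choose_spec (claim j h1 h2)).2
  refine ⟨∑ j, G j, ?_, ?_, ?_⟩
  · intro y hy
    rw [ContinuousLinearMap.sum_apply]
    exact Finset.sum_nonneg fun j _ => hG1 j y hy
  · intro j hj
    have h1 : 0 ≤ (∑ k, G k) (fun i => (M i j : ℝ)) := by
      rw [ContinuousLinearMap.sum_apply]
      exact Finset.sum_nonneg fun k _ => hG1 k _ (hj.2.1)
    have h2 : 0 ≤ (∑ k, G k) (-(fun i => (M i j : ℝ))) := by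
      rw [ContinuousLinearMap.sum_apply]
      exact Finset.sum_nonneg fun k _ => hG1 k _ (neg_col_mem_of_esupp M v hj)
    rw [map_neg] at h2
    linarith
  · intro j h1 h2
    rw [ContinuousLinearMap.sum_apply]
    refine Finset.sum_pos' (fun k _ => hG1 k _ (col_mem_newtonCone M v h1))
      ⟨j, Finset.mem_univ j, hGpos j h1 h2⟩

lemma face_relation {j : Fin n} (hj : j ∈ esupp M v) :
    ∃ c : Fin n → ℝ, (∀ k, 0 ≤ c k) ∧ (∀ k, k ∉ esupp M v → c k = 0) ∧
      (fun i => (M i j : ℝ)) + ∑ k, c k • (fun i => (M i k : ℝ)) = 0 := by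
  obtain ⟨c, hc0, hcs, hsum⟩ := neg_col_mem_of_esupp M v hj
  obtain ⟨φ, hφ1, hφ2, hφ3⟩ := exists_separating M v
  have hkey : ∀ k, c k ≠ 0 → k ∈ esupp M v := by
    intro k hck
    have hvk : v k ≠ 0 := by
      intro h
      exact hck (hcs k h)
    by_contra hke
    -- evaluate φ on the relation
    have hrel : ∑ k, c k * φ (fun i => (M i k : ℝ)) = 0 := by
      have := congrArg φ hsum
      rw [map_neg, map_sum] at this
      simp only [map_smul, smul_eq_mul] at this
      rw [hφ2 j hj] at this
      linarith [this]
    have hterms : ∀ k ∈ Finset.univ (α := Fin n), 0 ≤ c k * φ (fun i => (M i k : ℝ)) := by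
      intro k _
      by_cases h : c k = 0
      · rw [h, zero_mul]
      · have hvk' : v k ≠ 0 := fun hv => h (hcs k hv)
        exact mul_nonneg (hc0 k) (hφ1 _ (col_mem_newtonCone M v hvk'))
    have hz := (Finset.sum_eq_zero_iff_of_nonneg hterms).1 hrel k (Finset.mem_univ k)
    have hφk : φ (fun i => (M i k : ℝ)) = 0 := by
      rcases mul_eq_zero.1 hz with h | h
      · exact absurd h hck
      · exact h
    have := hφ3 k hvk hke
    rw [hφk] at this
    exact lt_irrefl 0 this
  refine ⟨c, hc0, fun k hk => ?_, ?_⟩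
  · by_contra hck
    exact hk (hkey k hck)
  · rw [← hsum]
    simp
end Sep

section Inv
variable {d n : ℕ} (M : Matrix (Fin d) (Fin n) ℤ) (v : Fin n → ℂ)
open TorusAux Topology ConeBasic

lemma abs_tmon_pos (t : Fin d → ℂˣ) (j : Fin n) : 0 < Complex.abs (tmon M t j) :=
  (Complex.abs.pos_iff).2 (tmon_ne_zero M t j)

lemma invariant_of_relation (b : Fin n → ℝ) (hb0 : ∀ j, 0 ≤ b j)
    (hrel : ∑ j, b j • (fun i => (M i j : ℝ)) = (0 : Fin d → ℝ)) (t : Fin d → ℂˣ) :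
    ∏ j, Complex.abs (tmon M t j) ^ (b j) = 1 := by
  have habs : ∀ i : Fin d, (0:ℝ) < Complex.abs ((t i : ℂ)) :=
    fun i => Complex.abs.pos_iff.2 (Units.ne_zero (t i))
  have hcoord : ∀ i, ∑ j, b j * (M i j : ℝ) = 0 := by
    intro i
    have h := congrFun hrel i
    rw [Finset.sum_apply] at h
    simpa using h
  have hlog : ∀ j, Real.log (Complex.abs (tmon M t j))
      = ∑ i, (M i j : ℝ) * Real.log (Complex.abs ((t i : ℂ))) := by
    intro j
    rw [tmon, map_prod]
    rw [Real.log_prod (fun i _ => by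
      rw [map_zpow₀]
      exact zpow_ne_zero _ (ne_of_gt (habs i)))]
    apply Finset.sum_congr rfl
    intro i _
    rw [map_zpow₀, Real.log_zpow]
  have hfac : ∀ j, Complex.abs (tmon M t j) ^ (b j)
      = Real.exp (b j * ∑ i, (M i j : ℝ) * Real.log (Complex.abs ((t i : ℂ)))) := by
    intro j
    rw [Real.rpow_def_of_pos (abs_tmon_pos M t j), hlog, mul_comm]
  rw [Finset.prod_congr rfl (fun j _ => hfac j), ← Real.exp_sum, ← Real.exp_zero]
  congr 1
  calc ∑ j, b j * ∑ i, (M i j : ℝ) * Real.log (Complex.abs ((t i : ℂ)))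
      = ∑ j, ∑ i, b j * ((M i j : ℝ) * Real.log (Complex.abs ((t i : ℂ)))) := by
        apply Finset.sum_congr rfl
        intro j _
        rw [Finset.mul_sum]
    _ = ∑ i, ∑ j, b j * ((M i j : ℝ) * Real.log (Complex.abs ((t i : ℂ)))) :=
        Finset.sum_comm
    _ = ∑ i, (∑ j, b j * (M i j : ℝ)) * Real.log (Complex.abs ((t i : ℂ))) := by
        apply Finset.sum_congr rfl
        intro i _
        rw [Finset.sum_mul]
        apply Finset.sum_congr rfl
        intro j _
        ring
    _ = 0 := by
        apply Finset.sum_eq_zero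
        intro i _
        rw [hcoord i, zero_mul]

lemma closure_ne_zero_of_relation (b : Fin n → ℝ) (hb0 : ∀ j, 0 ≤ b j)
    (hbv : ∀ j, b j ≠ 0 → v j ≠ 0)
    (hrel : ∑ j, b j • (fun i => (M i j : ℝ)) = (0 : Fin d → ℝ)) :
    ∀ w ∈ closure (torusOrbit M v), ∀ j, b j ≠ 0 → w j ≠ 0 := by
  classical
  obtain ⟨F, hF⟩ : ∃ F : (Fin n → ℂ) → ℝ,
      ∀ w, F w = ∏ j, Complex.abs (w j) ^ (b j) := ⟨_, fun _ => rfl⟩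
  have hFcont : Continuous F := by
    have : Continuous fun w : Fin n → ℂ => ∏ j, Complex.abs (w j) ^ (b j) := by
      apply continuous_finset_prod
      intro j _
      rw [continuous_iff_continuousAt]
      intro w
      exact (Real.continuousAt_rpow_const _ _ (Or.inr (hb0 j))).comp
        ((Complex.continuous_abs.comp (continuous_apply j)).continuousAt)
    simpa [funext hF] using this
  have hFinv : ∀ p ∈ torusOrbit M v, F p = F v := by
    rintro p ⟨t, rfl⟩
    rw [hF, hF]
    have hfac : ∀ j, Complex.abs (torusAct M t v j) ^ (b j)
        = Complex.abs (tmon M t j) ^ (b j) * Complex.abs (v j) ^ (b j) := by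
      intro j
      rw [torusAct_apply, map_mul, Real.mul_rpow (Complex.abs.nonneg _) (Complex.abs.nonneg _)]
    rw [Finset.prod_congr rfl (fun j _ => hfac j), Finset.prod_mul_distrib,
      invariant_of_relation M b hb0 hrel t, one_mul]
  have hFv : 0 < F v := by
    rw [hF]
    apply Finset.prod_pos
    intro j _
    by_cases hbj : b j = 0
    · rw [hbj, Real.rpow_zero]; norm_num
    · exact Real.rpow_pos_of_pos (Complex.abs.pos_iff.2 (hbv j hbj)) _
  intro w hw j hbj hwj
  have hclosed : closure (torusOrbit M v) ⊆ F ⁻¹' {F v} :=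
    closure_minimal (fun p hp => hFinv p hp) (IsClosed.preimage hFcont isClosed_singleton)
  have hFw : F w = F v := hclosed hw
  have : F w = 0 := by
    rw [hF]
    apply Finset.prod_eq_zero (Finset.mem_univ j)
    rw [hwj]
    simp only [map_zero]
    exact Real.zero_rpow hbj
  rw [hFw] at this
  exact absurd this (ne_of_gt hFv)

lemma esupp_ne_zero_of_closure {w : Fin n → ℂ} (hw : w ∈ closure (torusOrbit M v))
    {j : Fin n} (hj : j ∈ esupp M v) : w j ≠ 0 := by
  classical
  obtain ⟨c, hc0, hcs, hsum⟩ := face_relation M v hj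
  obtain ⟨b, hbdef⟩ : ∃ b : Fin n → ℝ,
      ∀ k, b k = (if k = j then 1 else 0) + c k := ⟨_, fun _ => rfl⟩
  have hb0 : ∀ k, 0 ≤ b k := by
    intro k
    rw [hbdef]
    apply add_nonneg _ (hc0 k)
    split <;> norm_num
  have hbv : ∀ k, b k ≠ 0 → v k ≠ 0 := by
    intro k hbk
    by_cases hkj : k = j
    · subst hkj; exact hj.1
    · intro hvk
      apply hbk
      rw [hbdef, if_neg hkj, zero_add]
      apply hcs
      intro hke
      exact hke.1 hvk
  have hrel : ∑ k, b k • (fun i => (M i k : ℝ)) = (0 : Fin d → ℝ) := by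
    have hsplit : ∀ k, b k • (fun i => (M i k : ℝ))
        = (if k = j then (1:ℝ) else 0) • (fun i => (M i k : ℝ)) + c k • (fun i => (M i k : ℝ)) := by
      intro k
      rw [hbdef, add_smul]
    rw [Finset.sum_congr rfl (fun k _ => hsplit k), Finset.sum_add_distrib]
    have h1 : ∑ k, (if k = j then (1:ℝ) else 0) • (fun i => (M i k : ℝ))
        = (fun i => (M i j : ℝ)) := by
      rw [Finset.sum_eq_single j]
      · simp
      · intro k _ hk
        rw [if_neg hk, zero_smul]
      · simp
    rw [h1]
    exact hsum
  have hbj : b j ≠ 0 := by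
    rw [hbdef, if_pos rfl]
    have := hc0 j
    intro h
    linarith
  exact closure_ne_zero_of_relation M v b hb0 hbv hrel w hw j hbj

end Inv

section Seq
variable {d n : ℕ} (M : Matrix (Fin d) (Fin n) ℤ) (v : Fin n → ℂ)
open TorusAux Topology Filter

lemma log_abs_tmon (t : Fin d → ℂˣ) (j : Fin n) :
    Real.log (Complex.abs (tmon M t j))
      = ∑ i, (M i j : ℝ) * Real.log (Complex.abs ((t i : ℂ))) := by
  have habs : ∀ i : Fin d, (0:ℝ) < Complex.abs ((t i : ℂ)) :=
    fun i => Complex.abs.pos_iff.2 (Units.ne_zero (t i))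
  rw [tmon, map_prod]
  rw [Real.log_prod (fun i _ => by
    rw [map_zpow₀]
    exact zpow_ne_zero _ (ne_of_gt (habs i)))]
  apply Finset.sum_congr rfl
  intro i _
  rw [map_zpow₀, Real.log_zpow]

lemma exp_zpow (t : ℝ) (m : ℤ) : (Real.exp t) ^ m = Real.exp (m * t) := by
  rw [← Real.rpow_intCast (Real.exp t) m, Real.rpow_def_of_pos (Real.exp_pos t), Real.log_exp,
    mul_comm]

lemma ofReal_abs_tmon (t : Fin d → ℂˣ) (j : Fin n) :
    ((Complex.abs (tmon M t j) : ℝ) : ℂ) = ∏ i, ((Complex.abs ((t i : ℂ)) : ℝ) : ℂ) ^ (M i j) := by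
  rw [tmon, map_prod, Complex.ofReal_prod]
  apply Finset.prod_congr rfl
  intro i _
  rw [map_zpow₀, Complex.ofReal_zpow]

lemma mem_orbit_of_closure_of_support {w : Fin n → ℂ}
    (hw : w ∈ closure (torusOrbit M v)) (hsupp : ∀ j, v j ≠ 0 → w j ≠ 0) :
    w ∈ torusOrbit M v := by
  classical
  obtain ⟨sq, hsqmem, hsqlim⟩ := mem_closure_iff_seq_limit.1 hw
  choose ts hts using hsqmem
  -- convergence of monomial values for j in the support
  have h_tmon : ∀ j : Fin n, v j ≠ 0 →
      Tendsto (fun k => tmon M (ts k) j) atTop (𝓝 (w j * (v j)⁻¹)) := by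
    intro j hvj
    have h1 : Tendsto (fun k => sq k j) atTop (𝓝 (w j)) := (tendsto_pi_nhds.1 hsqlim) j
    have h2 := h1.mul_const ((v j)⁻¹)
    have h3 : ∀ k, sq k j * (v j)⁻¹ = tmon M (ts k) j := by
      intro k
      rw [hts k, torusAct_apply, mul_assoc, mul_inv_cancel₀ hvj, mul_one]
    rw [tendsto_congr h3] at h2
    exact h2
  -- the limit of logs of absolute values lies in the range of Λ
  obtain ⟨Λ, hΛ⟩ : ∃ Λ : (Fin d → ℝ) →ₗ[ℝ] ({j : Fin n // v j ≠ 0} → ℝ),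
      ∀ x j, Λ x j = ∑ i, (M i (j : Fin n) : ℝ) * x i := by
    refine ⟨LinearMap.pi (fun j : {j : Fin n // v j ≠ 0} =>
      ∑ i : Fin d, ((M i (j : Fin n) : ℝ)) • (LinearMap.proj i : (Fin d → ℝ) →ₗ[ℝ] ℝ)), ?_⟩
    intro x j
    simp [LinearMap.pi_apply, LinearMap.sum_apply, LinearMap.smul_apply, LinearMap.proj_apply,
      smul_eq_mul]
  obtain ⟨xk, hxk⟩ : ∃ xk : ℕ → (Fin d → ℝ),
      ∀ k i, xk k i = Real.log (Complex.abs ((ts k i : ℂ))) := ⟨_, fun _ _ => rfl⟩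
  have hyk : ∀ k (j : {j : Fin n // v j ≠ 0}),
      Λ (xk k) j = Real.log (Complex.abs (tmon M (ts k) (j : Fin n))) := by
    intro k j
    rw [hΛ, log_abs_tmon]
    apply Finset.sum_congr rfl
    intro i _
    rw [hxk]
  have habsne : ∀ j : Fin n, v j ≠ 0 → Complex.abs (w j * (v j)⁻¹) ≠ 0 := by
    intro j hvj
    simp only [map_mul, ne_eq, mul_eq_zero]
    push_neg
    constructor
    · exact Complex.abs.ne_zero (hsupp j hvj)
    · exact Complex.abs.ne_zero (inv_ne_zero hvj)
  have hylim : Tendsto (fun k => Λ (xk k)) atTop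
      (𝓝 (fun j : {j : Fin n // v j ≠ 0} => Real.log (Complex.abs (w j * ((v j : ℂ))⁻¹)))) := by
    rw [tendsto_pi_nhds]
    intro j
    have h1 := (Complex.continuous_abs.tendsto _).comp (h_tmon (j : Fin n) j.2)
    have h2 := (Real.continuousAt_log (habsne (j:Fin n) j.2)).tendsto.comp h1
    have h3 : ∀ k, (Real.log ∘ (Complex.abs ∘ fun k => tmon M (ts k) (j:Fin n))) k
        = Λ (xk k) j := by
      intro k
      simp only [Function.comp_apply]
      rw [hyk]
    rw [tendsto_congr h3] at h2
    exact h2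
  have hrange : (fun j : {j : Fin n // v j ≠ 0} => Real.log (Complex.abs (w j * ((v j : ℂ))⁻¹)))
      ∈ LinearMap.range Λ := by
    have hclosed := (LinearMap.range Λ).closed_of_finiteDimensional
    exact hclosed.mem_of_tendsto hylim (Filter.Eventually.of_forall (fun k => ⟨xk k, rfl⟩))
  obtain ⟨x, hx⟩ := hrange
  -- compactness for the angular part
  obtain ⟨θk, hθk⟩ : ∃ θk : ℕ → (Fin d → ℂ),
      ∀ k i, θk k i = (ts k i : ℂ) / ((Complex.abs ((ts k i : ℂ)) : ℝ) : ℂ) := ⟨_, fun _ _ => rfl⟩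
  have habsts : ∀ k i, Complex.abs ((ts k i : ℂ)) ≠ 0 :=
    fun k i => Complex.abs.ne_zero (Units.ne_zero _)
  have hθkmem : ∀ k, θk k ∈ Set.pi Set.univ (fun _ : Fin d => Metric.sphere (0:ℂ) 1) := by
    intro k
    intro i _
    simp only [Metric.mem_sphere, dist_zero_right, Complex.norm_eq_abs]
    rw [hθk, map_div₀, Complex.abs_ofReal, abs_of_nonneg (Complex.abs.nonneg _),
      div_self (habsts k i)]
  obtain ⟨θ, hθmem, ψ, hψ, hψtend⟩ :=
    (isCompact_univ_pi (fun _ : Fin d => isCompact_sphere (0:ℂ) 1)).tendsto_subseq hθkmem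
  have hθne : ∀ i, θ i ≠ 0 := by
    intro i
    have := hθmem i (Set.mem_univ i)
    simp only [Metric.mem_sphere, dist_zero_right, Complex.norm_eq_abs] at this
    intro h
    rw [h] at this
    simp at this
  -- the candidate torus element
  have hTne : ∀ i, ((Real.exp (x i) : ℝ) : ℂ) * θ i ≠ 0 := by
    intro i
    apply mul_ne_zero _ (hθne i)
    simp [Real.exp_ne_zero]
  refine ⟨fun i => Units.mk0 _ (hTne i), ?_⟩
  funext j
  by_cases hvj : v j = 0
  · rw [torusAct_apply, hvj, mul_zero]
    exact closure_orbit_zero M hvj w hw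
  · -- main computation
    rw [torusAct_apply]
    -- split the monomial into modulus and angular part
    have hsplit : tmon M (fun i => Units.mk0 _ (hTne i)) j
        = (∏ i, ((Real.exp (x i) : ℝ) : ℂ) ^ (M i j)) * (∏ i, (θ i) ^ (M i j)) := by
      rw [tmon, ← Finset.prod_mul_distrib]
      apply Finset.prod_congr rfl
      intro i _
      rw [Units.val_mk0, mul_zpow]
    -- modulus part
    have hmod : (∏ i, ((Real.exp (x i) : ℝ) : ℂ) ^ (M i j))
        = ((Complex.abs (w j * (v j)⁻¹) : ℝ) : ℂ) := by
      have h1 : ∀ i : Fin d, ((Real.exp (x i) : ℝ) : ℂ) ^ (M i j)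
          = ((Real.exp ((M i j : ℝ) * x i) : ℝ) : ℂ) := by
        intro i
        rw [← Complex.ofReal_zpow, exp_zpow]
      rw [Finset.prod_congr rfl (fun i _ => h1 i), ← Complex.ofReal_prod, ← Real.exp_sum]
      have h2 : ∑ i, (M i j : ℝ) * x i = Real.log (Complex.abs (w j * (v j)⁻¹)) := by
        have := congrFun hx ⟨j, hvj⟩
        rw [hΛ] at this
        exact this
      rw [h2, Real.exp_log (lt_of_le_of_ne (Complex.abs.nonneg _) (Ne.symm (habsne j hvj)))]
    -- angular part
    have hang : (∏ i, (θ i) ^ (M i j))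
        = (w j * (v j)⁻¹) / ((Complex.abs (w j * (v j)⁻¹) : ℝ) : ℂ) := by
      -- limit of the angular monomials along the subsequence
      have hgtend : Tendsto (fun l => ∏ i, (θk (ψ l) i) ^ (M i j)) atTop
          (𝓝 (∏ i, (θ i) ^ (M i j))) := by
        apply tendsto_finset_prod
        intro i _
        have hcomp : Tendsto (fun l => θk (ψ l) i) atTop (𝓝 (θ i)) :=
          (tendsto_pi_nhds.1 hψtend) i
        exact ((continuousAt_zpow₀ (θ i) (M i j) (Or.inl (hθne i))).tendsto).comp hcomp
      have hgval : ∀ k, (∏ i, (θk k i) ^ (M i j))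
          = tmon M (ts k) j / ((Complex.abs (tmon M (ts k) j) : ℝ) : ℂ) := by
        intro k
        rw [ofReal_abs_tmon, tmon, ← Finset.prod_div_distrib]
        apply Finset.prod_congr rfl
        intro i _
        rw [hθk, div_zpow]
      have htmonsub : Tendsto (fun l => tmon M (ts (ψ l)) j) atTop (𝓝 (w j * (v j)⁻¹)) :=
        (h_tmon j hvj).comp hψ.tendsto_atTop
      have habssub : Tendsto (fun l => ((Complex.abs (tmon M (ts (ψ l)) j) : ℝ) : ℂ)) atTop
          (𝓝 ((Complex.abs (w j * (v j)⁻¹) : ℝ) : ℂ)) := by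
        have := (Complex.continuous_ofReal.tendsto _).comp
          ((Complex.continuous_abs.tendsto _).comp htmonsub)
        exact this
      have hdiv := htmonsub.div habssub (by
        simp only [ne_eq, Complex.ofReal_eq_zero]
        exact habsne j hvj)
      have : Tendsto (fun l => ∏ i, (θk (ψ l) i) ^ (M i j)) atTop
          (𝓝 ((w j * (v j)⁻¹) / ((Complex.abs (w j * (v j)⁻¹) : ℝ) : ℂ))) := by
        rw [tendsto_congr (fun l => hgval (ψ l))]
        exact hdiv
      exact tendsto_nhds_unique hgtend this
    rw [hsplit, hmod, hang]
    rw [mul_div_cancel₀]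
    · rw [mul_assoc, inv_mul_cancel₀ hvj, mul_one]
    · simp only [ne_eq, Complex.ofReal_eq_zero]
      exact habsne j hvj
end Seq

section Lim
variable {d n : ℕ} (M : Matrix (Fin d) (Fin n) ℤ) (v : Fin n → ℂ)
open ConeBasic TorusAux Filter Topology

lemma mem_esupp_of_indicator_ne {j : Fin n} (h : (esupp M v).indicator v j ≠ 0) :
    j ∈ esupp M v := by
  by_contra hj
  rw [Set.indicator_of_notMem hj] at h
  exact h rfl

lemma indicator_apply_of_mem {j : Fin n} (h : j ∈ esupp M v) :
    (esupp M v).indicator v j = v j := Set.indicator_of_mem h v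

lemma tilde_mem_closure : (esupp M v).indicator v ∈ closure (torusOrbit M v) := by
  classical
  obtain ⟨φ, hφ1, hφ2, hφ3⟩ := exists_separating M v
  obtain ⟨u, hu⟩ : ∃ u : Fin d → ℝ, ∀ i, u i = φ (fun k => if i = k then 1 else 0) :=
    ⟨_, fun _ => rfl⟩
  obtain ⟨a, haa⟩ : ∃ a : Fin n → ℝ, ∀ j, a j = φ (fun i => (M i j : ℝ)) :=
    ⟨_, fun _ => rfl⟩
  have hcol : ∀ j : Fin n, φ (fun i => (M i j : ℝ)) = ∑ i, (M i j : ℝ) * u i := by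
    intro j
    have hexp : (fun i => (M i j : ℝ)) = ∑ i, (M i j : ℝ) • (fun k => if i = k then (1:ℝ) else 0) :=
      pi_eq_sum_univ _
    rw [hexp, map_sum]
    apply Finset.sum_congr rfl
    intro i _
    rw [map_smul, smul_eq_mul, hu]
  obtain ⟨t, htt⟩ : ∃ t : ℕ → (Fin d → ℂˣ), ∀ s i,
      t s i = Units.mk0 (Complex.exp (((-((s:ℝ) * u i) : ℝ) : ℂ))) (Complex.exp_ne_zero _) :=
    ⟨_, fun _ _ => rfl⟩
  have htmon : ∀ s j, tmon M (t s) j = Complex.exp (((-((s:ℝ) * a j) : ℝ) : ℂ)) := by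
    intro s j
    rw [tmon]
    have hfac : ∀ i : Fin d, ((t s i : ℂ)) ^ (M i j)
        = Complex.exp ((M i j : ℤ) * ((-((s:ℝ) * u i) : ℝ) : ℂ)) := by
      intro i
      rw [htt s i]
      simp only [Units.val_mk0]
      rw [← Complex.exp_int_mul]
    rw [Finset.prod_congr rfl (fun i _ => hfac i), ← Complex.exp_sum]
    congr 1
    have hreal : -((s:ℝ) * a j) = ∑ i, (M i j : ℝ) * (-((s:ℝ) * u i)) := by
      rw [haa j, hcol j, Finset.mul_sum, ← Finset.sum_neg_distrib]
      apply Finset.sum_congr rfl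
      intro i _
      ring
    rw [hreal]
    push_cast
    rfl
  rw [mem_closure_iff_seq_limit]
  refine ⟨fun s => torusAct M (t s) v, fun s => act_mem_orbit M (t s) v, ?_⟩
  rw [tendsto_pi_nhds]
  intro j
  by_cases hvj : v j = 0
  · have hind : (esupp M v).indicator v j = 0 := by
      by_cases hj : j ∈ esupp M v
      · rw [Set.indicator_of_mem hj]; exact hvj
      · exact Set.indicator_of_notMem hj v
    rw [hind]
    have hz : ∀ s, torusAct M (t s) v j = 0 := by
      intro s
      rw [torusAct_apply, hvj, mul_zero]
    simp only [hz]
    exact tendsto_const_nhds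
  · by_cases hj : j ∈ esupp M v
    · have haj : a j = 0 := by rw [haa]; exact hφ2 j hj
      have hone : ∀ s, torusAct M (t s) v j = v j := by
        intro s
        rw [torusAct_apply, htmon, haj]
        simp
      simp only [hone]
      rw [indicator_apply_of_mem M v hj]
      exact tendsto_const_nhds
    · have haj : 0 < a j := by rw [haa]; exact hφ3 j hvj hj
      have hind : (esupp M v).indicator v j = 0 := Set.indicator_of_notMem hj v
      rw [hind]
      have heq : ∀ s, torusAct M (t s) v j
          = ((Real.exp (-((s:ℝ) * a j)) : ℝ) : ℂ) * v j := by
        intro s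
        rw [torusAct_apply, htmon, Complex.ofReal_exp]
      simp only [heq]
      have h1 : Tendsto (fun s : ℕ => (s : ℝ) * a j) atTop atTop :=
        Tendsto.atTop_mul_const haj tendsto_natCast_atTop_atTop
      have h2 : Tendsto (fun s : ℕ => -((s : ℝ) * a j)) atTop atBot :=
        tendsto_neg_atTop_atBot.comp h1
      have h3 : Tendsto (fun s : ℕ => Real.exp (-((s : ℝ) * a j))) atTop (𝓝 0) :=
        Real.tendsto_exp_atBot.comp h2
      have h4 : Tendsto (fun s : ℕ => ((Real.exp (-((s : ℝ) * a j)) : ℝ) : ℂ)) atTop (𝓝 0) := by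
        have hcomp := (Complex.continuous_ofReal.tendsto 0).comp h3
        have heqf : (Complex.ofReal ∘ fun s : ℕ => Real.exp (-((s:ℝ) * a j)))
            = fun s : ℕ => ((Real.exp (-((s:ℝ) * a j)) : ℝ) : ℂ) := rfl
        rw [heqf] at hcomp
        rwa [Complex.ofReal_zero] at hcomp
      have h5 := h4.mul_const (v j)
      rwa [zero_mul] at h5

lemma part1 : torusOrbit M ((esupp M v).indicator v) ⊆ closure (torusOrbit M v) :=
  orbit_subset_closure_of_mem M (tilde_mem_closure M v)

end Lim

section Fin2
variable {d n : ℕ} (M : Matrix (Fin d) (Fin n) ℤ) (v : Fin n → ℂ)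
open TorusAux Topology Filter ConeBasic

lemma neg_mem_newtonCone
    (hgen : ∀ j, v j ≠ 0 → -(fun i => (M i j : ℝ)) ∈ newtonCone M v)
    {y : Fin d → ℝ} (hy : y ∈ newtonCone M v) : -y ∈ newtonCone M v := by
  classical
  obtain ⟨c, hc0, hcs, rfl⟩ := hy
  obtain ⟨g, hg⟩ : ∃ g : Fin n → (Fin d → ℝ),
      ∀ j, g j = c j • (-(fun i => (M i j : ℝ))) := ⟨_, fun _ => rfl⟩
  have hgmem : ∀ j, g j ∈ newtonCone M v := by
    intro j
    rw [hg]
    by_cases hcj : c j = 0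
    · rw [hcj, zero_smul]
      exact zero_mem_newtonCone M v
    · exact smul_mem_newtonCone M v (hc0 j) (hgen j (fun hv => hcj (hcs j hv)))
  have hsum : ∑ j, g j = -(∑ j, c j • (fun i => (M i j : ℝ))) := by
    rw [← Finset.sum_neg_distrib]
    apply Finset.sum_congr rfl
    intro j _
    rw [hg, smul_neg]
  rw [← hsum]
  exact sum_mem_newtonCone M v g hgmem

lemma lineality_mono {w : Fin n → ℂ} (h : ∀ j, v j = 0 → w j = 0) :
    lineality M w ⊆ lineality M v := by
  intro y hy
  refine ⟨newtonCone_mono M v h hy.1, ?_⟩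
  have h2 := hy.2
  rw [Set.mem_neg] at h2
  rw [Set.mem_neg]
  exact newtonCone_mono M v h h2

lemma mem_esupp_all_of_cone_eq (hCL : newtonCone M v = lineality M v) :
    ∀ j, v j ≠ 0 → j ∈ esupp M v := by
  intro j hj
  have := col_mem_newtonCone M v hj
  rw [hCL] at this
  exact ⟨hj, this⟩

lemma isClosed_orbit_of_cone_eq (hCL : newtonCone M v = lineality M v) :
    IsClosed (torusOrbit M v) := by
  rw [← closure_subset_iff_isClosed]
  intro w hw
  apply mem_orbit_of_closure_of_support M v hw
  intro j hvj
  exact esupp_ne_zero_of_closure M v hw (mem_esupp_all_of_cone_eq M v hCL j hvj)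

lemma tilde_supp {j : Fin n} :
    (esupp M v).indicator v j ≠ 0 ↔ j ∈ esupp M v := by
  constructor
  · exact mem_esupp_of_indicator_ne M v
  · intro hj
    rw [indicator_apply_of_mem M v hj]
    exact hj.1

lemma tilde_cone_eq :
    newtonCone M ((esupp M v).indicator v) = lineality M ((esupp M v).indicator v) := by
  have hgen : ∀ j, (esupp M v).indicator v j ≠ 0 →
      -(fun i => (M i j : ℝ)) ∈ newtonCone M ((esupp M v).indicator v) := by
    intro j hj
    have hje : j ∈ esupp M v := (tilde_supp M v).1 hj
    obtain ⟨c, hc0, hcs, hsum⟩ := face_relation M v hje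
    refine ⟨c, hc0, ?_, ?_⟩
    · intro k hk
      apply hcs
      intro hke
      rw [indicator_apply_of_mem M v hke] at hk
      exact hke.1 hk
    · have := eq_neg_of_add_eq_zero_right hsum
      rw [← this]
  apply Set.Subset.antisymm
  · intro y hy
    refine ⟨hy, ?_⟩
    rw [Set.mem_neg]
    exact neg_mem_newtonCone M _ hgen hy
  · exact Set.inter_subset_left

lemma tilde_orbit_closed : IsClosed (torusOrbit M ((esupp M v).indicator v)) :=
  isClosed_orbit_of_cone_eq M _ (tilde_cone_eq M v)

lemma esupp_eq_of_closure {w : Fin n → ℂ} (hw : w ∈ closure (torusOrbit M v)) :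
    esupp M w = esupp M v := by
  have hsubsupp : ∀ j, v j = 0 → w j = 0 := fun j hj => closure_orbit_zero M hj w hw
  apply Set.Subset.antisymm
  · rintro j ⟨hwj, hlin⟩
    have hvj : v j ≠ 0 := by
      intro hv
      exact hwj (hsubsupp j hv)
    exact ⟨hvj, lineality_mono M v hsubsupp hlin⟩
  · intro j hj
    have hwj : w j ≠ 0 := esupp_ne_zero_of_closure M v hw hj
    apply esupp_of_mem_neg M w hwj
    obtain ⟨c, hc0, hcs, hsum⟩ := face_relation M v hj
    refine ⟨c, hc0, ?_, ?_⟩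
    · intro k hk
      apply hcs
      intro hke
      exact esupp_ne_zero_of_closure M v hw hke hk
    · have := eq_neg_of_add_eq_zero_right hsum
      rw [← this]

lemma indicator_torusAct (E : Set (Fin n)) (t : Fin d → ℂˣ) (p : Fin n → ℂ) :
    E.indicator (torusAct M t p) = torusAct M t (E.indicator p) := by
  classical
  funext j
  by_cases hj : j ∈ E
  · rw [Set.indicator_of_mem hj, torusAct_apply, torusAct_apply, Set.indicator_of_mem hj]
  · rw [Set.indicator_of_notMem hj, torusAct_apply, Set.indicator_of_notMem hj, mul_zero]

lemma continuous_indicator_pi (E : Set (Fin n)) :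
    Continuous (fun p : Fin n → ℂ => E.indicator p) := by
  classical
  apply continuous_pi
  intro j
  by_cases hj : j ∈ E
  · have : (fun p : Fin n → ℂ => E.indicator p j) = fun p => p j := by
      funext p
      exact Set.indicator_of_mem hj p
    rw [this]
    exact continuous_apply j
  · have : (fun p : Fin n → ℂ => E.indicator p j) = fun _ => 0 := by
      funext p
      exact Set.indicator_of_notMem hj p
    rw [this]
    exact continuous_const

lemma indicator_mem_closure_indicator {w : Fin n → ℂ} (hw : w ∈ closure (torusOrbit M v))
    (E : Set (Fin n)) : E.indicator w ∈ closure (torusOrbit M (E.indicator v)) := by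
  have h1 : E.indicator w ∈ (fun p : Fin n → ℂ => E.indicator p) '' closure (torusOrbit M v) :=
    ⟨w, hw, rfl⟩
  have h2 := image_closure_subset_closure_image (continuous_indicator_pi E)
    (s := torusOrbit M v) h1
  apply closure_mono ?_ h2
  rintro p ⟨q, ⟨t, rfl⟩, rfl⟩
  exact ⟨t, by rw [← indicator_torusAct]⟩

end Fin2

open TorusAux ConeBasic

/-- The orbit of `ṽ := v|_{esupp v}` is contained in every orbit closure contained in
`closure (O_v)`; consequently it is the unique closed orbit in `closure (O_v)`, and `O_v` is
closed iff the Newton cone `C(v)` equals its lineality space `L(v)`. -/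
theorem closed_orbit_in_orbit_closure {d n : ℕ} (M : Matrix (Fin d) (Fin n) ℤ)
    (v : Fin n → ℂ) :
    torusOrbit M ((esupp M v).indicator v) ⊆ closure (torusOrbit M v) ∧
    (∀ w : Fin n → ℂ, closure (torusOrbit M w) ⊆ closure (torusOrbit M v) →
      torusOrbit M ((esupp M v).indicator v) ⊆ closure (torusOrbit M w)) ∧
    IsClosed (torusOrbit M ((esupp M v).indicator v)) ∧
    (∀ w : Fin n → ℂ, IsClosed (torusOrbit M w) →
      torusOrbit M w ⊆ closure (torusOrbit M v) →
      torusOrbit M w = torusOrbit M ((esupp M v).indicator v)) ∧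
    (IsClosed (torusOrbit M v) ↔ newtonCone M v = lineality M v) := by
  classical
  have partB : ∀ w : Fin n → ℂ, closure (torusOrbit M w) ⊆ closure (torusOrbit M v) →
      torusOrbit M ((esupp M v).indicator v) ⊆ closure (torusOrbit M w) := by
    intro w hclos
    have hwv : w ∈ closure (torusOrbit M v) := hclos (subset_closure (self_mem_orbit M w))
    have heq : esupp M w = esupp M v := esupp_eq_of_closure M v hwv
    have hwt : (esupp M w).indicator w ∈ closure (torusOrbit M w) := tilde_mem_closure M w
    rw [heq] at hwt
    have hind : (esupp M v).indicator w ∈ closure (torusOrbit M ((esupp M v).indicator v)) :=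
      indicator_mem_closure_indicator M v hwv _
    have hclosed := tilde_orbit_closed M v
    have hmem : (esupp M v).indicator w ∈ torusOrbit M ((esupp M v).indicator v) := by
      rwa [hclosed.closure_eq] at hind
    have horb : torusOrbit M ((esupp M v).indicator w)
        = torusOrbit M ((esupp M v).indicator v) := orbit_eq_of_mem M hmem
    rw [← horb]
    exact orbit_subset_closure_of_mem M hwt
  refine ⟨part1 M v, partB, tilde_orbit_closed M v, ?_, ?_⟩
  · intro w hwcl hsub
    have h2 : torusOrbit M ((esupp M v).indicator v) ⊆ closure (torusOrbit M w) :=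
      partB w (closure_minimal hsub isClosed_closure)
    have hvt_mem : (esupp M v).indicator v ∈ torusOrbit M w := by
      have := h2 (self_mem_orbit M _)
      rwa [hwcl.closure_eq] at this
    exact (orbit_eq_of_mem M hvt_mem).symm
  · constructor
    · intro hclosed
      apply Set.Subset.antisymm ?_ Set.inter_subset_left
      have hesupp : ∀ j, v j ≠ 0 → j ∈ esupp M v := by
        intro j hvj
        by_contra hj
        have htil := tilde_mem_closure M v
        rw [hclosed.closure_eq] at htil
        have hz : (esupp M v).indicator v j = 0 := Set.indicator_of_notMem hj v
        exact hvj ((orbit_zero_iff M htil j).1 hz)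
      have hgen : ∀ j, v j ≠ 0 → -(fun i => (M i j : ℝ)) ∈ newtonCone M v := by
        intro j hvj
        obtain ⟨c, hc0, hcs, hsum⟩ := face_relation M v (hesupp j hvj)
        refine ⟨c, hc0, ?_, ?_⟩
        · intro k hk
          apply hcs
          intro hke
          exact hke.1 hk
        · have := eq_neg_of_add_eq_zero_right hsum
          rw [← this]
      intro y hy
      exact ⟨hy, Set.mem_neg.mpr (neg_mem_newtonCone M v hgen hy)⟩
    · exact isClosed_orbit_of_cone_eq M v
end
end
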